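/- arXiv:1112.0800 — 2 statements merged into one kernel-verified Lean document; each statement's English description precedes it below -/
import Mathlib

section
/- Let G be a graph containing a triangle u,v,w, where u has degree 3 in G. Then every embedding of G - vw into a surface can be extended to an embedding of G into the same surface. In particular, the genus of G equals the genus of G - vw. -/
open SimpleGraph

namespace AltPaper

variable {V : Type*} {W : Type*} {U : Type*}

/-- The dart-reversal permutation of a graph. -/
def dartRev (G : SimpleGraph V) : Equiv.Perm G.Dart :=
  Function.Involutive.toPerm SimpleGraph.Dart.symm SimpleGraph.Dart.symm_involutive

/-- A combinatorial embedding of `G` into an orientable surface, given by a rotation system: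
a permutation of the darts whose orbits are exactly the stars of the vertices. -/
structure RotSys (G : SimpleGraph V) where
  rot : Equiv.Perm G.Dart
  fst_rot : ∀ d : G.Dart, (rot d).fst = d.fst
  orbit_full : ∀ d d' : G.Dart, d.fst = d'.fst → ∃ n : ℕ, (rot ^ n) d = d'

namespace RotSys

variable {G : SimpleGraph V}

/-- The face-tracing permutation of the rotation system. -/
def facePerm (R : RotSys G) : Equiv.Perm G.Dart := (dartRev G).trans R.rot

/-- The number of faces of the embedding: the number of orbits of the face permutation. -/
noncomputable def numFaces (R : RotSys G) : ℕ :=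
  Nat.card (MulAction.orbitRel.Quotient (Subgroup.zpowers R.facePerm) G.Dart)

/-- The number of non-isolated vertices: orbits of the rotation. -/
noncomputable def numVerts (R : RotSys G) : ℕ :=
  Nat.card (MulAction.orbitRel.Quotient (Subgroup.zpowers R.rot) G.Dart)

/-- The number of connected components containing at least one edge. -/
noncomputable def numComps (R : RotSys G) : ℕ :=
  Nat.card (MulAction.orbitRel.Quotient (Subgroup.closure {R.rot, dartRev G}) G.Dart)

/-- By Euler's formula, the (total, orientable) genus of the embedding `R` is at most `k`.
Isolated vertices are irrelevant for the genus and are ignored. -/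
noncomputable def genusLE (R : RotSys G) (k : ℕ) : Prop :=
  2 * R.numComps + Nat.card G.edgeSet ≤ 2 * k + R.numFaces + R.numVerts

/-- Vertices `v₁ v₂ v₃ v₄` appear (in this cyclic order) on a common face of `R`. -/
def cyclicOrderedFace (R : RotSys G) (v₁ v₂ v₃ v₄ : V) : Prop :=
  ∃ (d : G.Dart) (a b c : ℕ), 0 < a ∧ a < b ∧ b < c ∧
    c < Function.minimalPeriod (⇑R.facePerm) d ∧
    d.fst = v₁ ∧ ((R.facePerm ^ a) d).fst = v₂ ∧ ((R.facePerm ^ b) d).fst = v₃ ∧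
    ((R.facePerm ^ c) d).fst = v₄

/-- There is a face of `R` in which `x` and `y` appear (at least) twice, in the alternating
cyclic order `x, y, x, y`. -/
def altFace (R : RotSys G) (x y : V) : Prop := R.cyclicOrderedFace x y x y

/-- `u` and `v` lie on a common face of `R`. -/
def Cofacial (R : RotSys G) (u v : V) : Prop :=
  ∃ (d : G.Dart) (n : ℕ), d.fst = u ∧ ((R.facePerm ^ n) d).fst = v

/-- All vertices of `s` lie on a common face of `R`. -/
def CofacialSet (R : RotSys G) (s : Set V) : Prop :=
  ∃ d : G.Dart, ∀ v ∈ s, ∃ n : ℕ, ((R.facePerm ^ n) d).fst = v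

end RotSys

/-- `G` embeds in the orientable surface of genus `k`. -/
def GenusLE (G : SimpleGraph V) (k : ℕ) : Prop := ∃ R : RotSys G, R.genusLE k

/-- `G` has an embedding in the orientable surface of genus `k` with a face in which the
vertices `x` and `y` appear twice, in alternating cyclic order. -/
def AltEmb (G : SimpleGraph V) (x y : V) (k : ℕ) : Prop :=
  ∃ R : RotSys G, R.genusLE k ∧ R.altFace x y

end AltPaper
namespace AltPaper

variable {V : Type*} {W : Type*} {U : Type*}

/-- A combinatorial embedding of `G` into a (possibly non-orientable) surface:
a rotation system together with a signature on the edges. -/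
structure SRS (G : SimpleGraph V) where
  rot : Equiv.Perm G.Dart
  fst_rot : ∀ d : G.Dart, (rot d).fst = d.fst
  orbit_full : ∀ d d' : G.Dart, d.fst = d'.fst → ∃ n : ℕ, (rot ^ n) d = d'
  sign : Sym2 V → Bool

namespace SRS

variable {G : SimpleGraph V}

/-- Auxiliary involution used in signed face tracing: reverse the dart and update the side. -/
def flip (S : SRS G) : Equiv.Perm (G.Dart × Bool) :=
  Function.Involutive.toPerm (fun p => (p.1.symm, xor p.2 (S.sign p.1.edge)))
    (by
      rintro ⟨d, s⟩
      have h1 : d.symm.symm = d := SimpleGraph.Dart.symm_involutive d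
      have h2 : d.symm.edge = d.edge := SimpleGraph.Dart.edge_symm d
      simp [h1, h2, Bool.xor_assoc])

/-- Auxiliary permutation used in signed face tracing: apply the rotation forwards or
backwards according to the current side. -/
def rotPm (S : SRS G) : Equiv.Perm (G.Dart × Bool) where
  toFun p := (cond p.2 (S.rot p.1) (S.rot.symm p.1), p.2)
  invFun p := (cond p.2 (S.rot.symm p.1) (S.rot p.1), p.2)
  left_inv := by rintro ⟨d, (_ | _)⟩ <;> simp
  right_inv := by rintro ⟨d, (_ | _)⟩ <;> simp

/-- The signed face-tracing permutation, acting on sided darts. -/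
def facePerm (S : SRS G) : Equiv.Perm (G.Dart × Bool) := (S.flip).trans (S.rotPm)

/-- Twice the number of faces (each face is traced once on each side). -/
noncomputable def numFaces2 (S : SRS G) : ℕ :=
  Nat.card (MulAction.orbitRel.Quotient (Subgroup.zpowers S.facePerm) (G.Dart × Bool))

noncomputable def numVerts (S : SRS G) : ℕ :=
  Nat.card (MulAction.orbitRel.Quotient (Subgroup.zpowers S.rot) G.Dart)

noncomputable def numComps (S : SRS G) : ℕ :=
  Nat.card (MulAction.orbitRel.Quotient (Subgroup.closure {S.rot, dartRev G}) G.Dart)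

/-- Twice the (total) Euler genus of the embedding, via Euler's formula. -/
noncomputable def eulerGenus2 (S : SRS G) : ℤ :=
  4 * S.numComps - 2 * S.numVerts + 2 * Nat.card G.edgeSet - S.numFaces2

/-- The Euler genus of the embedding is at most `h`. -/
noncomputable def eulerGenusLE (S : SRS G) (h : ℕ) : Prop := S.eulerGenus2 ≤ 2 * h

/-- The sided darts `p` and `q` lie on the same face. -/
def SameFace (S : SRS G) (p q : G.Dart × Bool) : Prop := ∃ n : ℤ, (S.facePerm ^ n) p = q

/-- The set of darts of the facial walk of the face of `p`. -/
def faceDarts (S : SRS G) (p : G.Dart × Bool) : Set G.Dart :=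
  {d | ∃ q, S.SameFace p q ∧ q.1 = d}

/-- The vertex `v` appears on the facial walk of the face of `p`. -/
def vertexOnFace (S : SRS G) (p : G.Dart × Bool) (v : V) : Prop :=
  ∃ d ∈ S.faceDarts p, d.fst = v

/-- The facial walk of the face of `p` visits `x` and `y` in alternating cyclic order
`x, y, x, y`. -/
def altFaceS (S : SRS G) (p : G.Dart × Bool) (x y : V) : Prop :=
  ∃ (a b c : ℕ), 0 < a ∧ a < b ∧ b < c ∧
    c < Function.minimalPeriod (⇑S.facePerm) p ∧
    p.1.fst = x ∧ ((S.facePerm ^ a) p).1.fst = y ∧ ((S.facePerm ^ b) p).1.fst = x ∧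
    ((S.facePerm ^ c) p).1.fst = y

end SRS

/-- `G` embeds in the projective plane. -/
def ProjPlanar (G : SimpleGraph V) : Prop := ∃ S : SRS G, S.eulerGenusLE 1

end AltPaper
namespace AltPaper

variable {V : Type*} {W : Type*} {U : Type*}

/-! ### The multigraph obtained by identifying two vertices, and its planar embeddings -/

/-- The darts of the multigraph `Ĥ` obtained from `G` by identifying `x` and `y`
(deleting the edge `xy` first, if present). -/
def PD (G : SimpleGraph V) (x y : V) : Type _ := {d : G.Dart // d.edge ≠ s(x, y)}

/-- The source vertex of a dart of `Ĥ`: the identified vertex `v_{xy}` is represented by `x`. -/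
def psrc (G : SimpleGraph V) (x y : V) [DecidableEq V] (d : PD G x y) : V :=
  if d.val.fst = y then x else d.val.fst

/-- Dart reversal in `Ĥ`. -/
def prev (G : SimpleGraph V) (x y : V) : Equiv.Perm (PD G x y) :=
  Function.Involutive.toPerm
    (fun d => ⟨d.val.symm, by rw [SimpleGraph.Dart.edge_symm]; exact d.prop⟩)
    (by
      rintro ⟨d, hd⟩
      exact Subtype.ext (SimpleGraph.Dart.symm_involutive d))

/-- A combinatorial embedding (in an orientable surface) of the multigraph `Ĥ` obtained from
`G` by identifying `x` and `y` into the vertex `v_{xy}` (loops are discarded). -/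
structure PinchRS (G : SimpleGraph V) (x y : V) [DecidableEq V] where
  rot : Equiv.Perm (PD G x y)
  src_rot : ∀ d, psrc G x y (rot d) = psrc G x y d
  orbit_full : ∀ d d', psrc G x y d = psrc G x y d' → ∃ n : ℕ, (rot ^ n) d = d'

namespace PinchRS

variable [DecidableEq V] {G : SimpleGraph V} {x y : V}

def facePerm (P : PinchRS G x y) : Equiv.Perm (PD G x y) := (prev G x y).trans P.rot

noncomputable def numFaces (P : PinchRS G x y) : ℕ :=
  Nat.card (MulAction.orbitRel.Quotient (Subgroup.zpowers P.facePerm) (PD G x y))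

noncomputable def numVerts (P : PinchRS G x y) : ℕ :=
  Nat.card (MulAction.orbitRel.Quotient (Subgroup.zpowers P.rot) (PD G x y))

noncomputable def numComps (P : PinchRS G x y) : ℕ :=
  Nat.card (MulAction.orbitRel.Quotient (Subgroup.closure {P.rot, prev G x y}) (PD G x y))

/-- The embedding `P` of `Ĥ` is planar (Euler's formula; the dart count is twice the
edge count). -/
noncomputable def Planar (P : PinchRS G x y) : Prop :=
  4 * P.numComps + Nat.card (PD G x y) ≤ 2 * P.numFaces + 2 * P.numVerts

/-- The number of label transitions in the cyclic sequence of labels around the identified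
vertex `v_{xy}`: a dart incident with `v_{xy}` is labelled `X` when it comes from `x`. -/
noncomputable def pinchTrans (P : PinchRS G x y) : ℕ :=
  Nat.card {d : PD G x y // psrc G x y d = x ∧
    ¬ ((d.val.fst = x) ↔ ((P.rot d).val.fst = x))}

end PinchRS

/-! ### Splitting the two terminals -/

/-- The projection recording that `Sum.inr false` is the second copy of `x` and
`Sum.inr true` is the second copy of `y` (while `Sum.inl x`, `Sum.inl y` are the first
copies). -/
def splitProj (x y : V) : V ⊕ Bool → V
  | Sum.inl v => v
  | Sum.inr false => x
  | Sum.inr true => y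

/-- `G'` is obtained from `G` by splitting `x` into `x₁ = Sum.inl x`, `x₂ = Sum.inr false`
and `y` into `y₁ = Sum.inl y`, `y₂ = Sum.inr true`, distributing the incident edges. -/
def IsSplitAt (G : SimpleGraph V) (x y : V) (G' : SimpleGraph (V ⊕ Bool)) : Prop :=
  (∀ a b, G'.Adj a b → G.Adj (splitProj x y a) (splitProj x y b)) ∧
  (∀ u v, G.Adj u v → ∃ a b, G'.Adj a b ∧ splitProj x y a = u ∧ splitProj x y b = v) ∧
  (∀ a b a' b', G'.Adj a b → G'.Adj a' b' →
    splitProj x y a = splitProj x y a' → splitProj x y b = splitProj x y b' → a = a' ∧ b = b')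

/-- The simple graph `G/xy` obtained from `G` by identifying `x` and `y` (the edge `xy`,
if present, is deleted first, and multiple edges are merged); the merged vertex is `x`,
and `y` becomes isolated. -/
def pinch (G : SimpleGraph V) (x y : V) : SimpleGraph V :=
  SimpleGraph.fromRel (fun a b => a ≠ y ∧ b ≠ y ∧
    ∃ a' b', G.Adj a' b' ∧ (a' = a ∨ (a' = y ∧ a = x)) ∧ (b' = b ∨ (b' = y ∧ b = x)))

/-- The graph `G*`: the `xy`-sum of `G` with a copy of `K₅` minus an edge, the two ends of
the deleted edge being identified with `x` and `y`. -/
def Gstar (G : SimpleGraph V) (x y : V) : SimpleGraph (V ⊕ Fin 3) :=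
  SimpleGraph.fromRel (fun a b =>
    (∃ u v, a = Sum.inl u ∧ b = Sum.inl v ∧ G.Adj u v) ∨
    (∃ i j : Fin 3, a = Sum.inr i ∧ b = Sum.inr j) ∨
    (∃ i : Fin 3, a = Sum.inr i ∧ (b = Sum.inl x ∨ b = Sum.inl y)))

/-- The two-terminal graph corresponding to an `XY`-labelled graph `H`:
add the terminal `x = Sum.inr false` joined to all `X`-labelled vertices and the terminal
`y = Sum.inr true` joined to all `Y`-labelled vertices. -/
def termGraph (H : SimpleGraph W) (lX lY : W → Prop) : SimpleGraph (W ⊕ Bool) :=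
  SimpleGraph.fromRel (fun a b =>
    (∃ u v, a = Sum.inl u ∧ b = Sum.inl v ∧ H.Adj u v) ∨
    (∃ u, a = Sum.inr false ∧ b = Sum.inl u ∧ lX u) ∨
    (∃ u, a = Sum.inr true ∧ b = Sum.inl u ∧ lY u))

/-- Identification map used for `xy`-sums: `w₁ ↦ u₁`, `w₂ ↦ u₂`. -/
def sumRho [DecidableEq W] (u₁ u₂ : U) (w₁ w₂ : W) : W → U ⊕ W := fun w =>
  if w = w₁ then Sum.inl u₁ else if w = w₂ then Sum.inl u₂ else Sum.inr w

/-- The `xy`-sum of `H₁` (with terminals `u₁, u₂`) and `H₂` (with terminals `w₁, w₂`):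
their union after identifying `u₁` with `w₁` and `u₂` with `w₂`; the edge between the two
identified vertices is deleted even if present in a summand. -/
def xySum [DecidableEq W] (H₁ : SimpleGraph U) (u₁ u₂ : U)
    (H₂ : SimpleGraph W) (w₁ w₂ : W) : SimpleGraph (U ⊕ W) :=
  SimpleGraph.fromRel (fun p q => s(p, q) ≠ s(Sum.inl u₁, Sum.inl u₂) ∧
    ((∃ a b, p = Sum.inl a ∧ q = Sum.inl b ∧ H₁.Adj a b) ∨
     (∃ a b, H₂.Adj a b ∧ p = sumRho u₁ u₂ w₁ w₂ a ∧ q = sumRho u₁ u₂ w₁ w₂ b)))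

/-! ### Subdivisions -/

/-- A subdivision of `K` contained in `G`: branch vertices are given by the injection `f`,
branches are internally disjoint paths avoiding the branch vertices. -/
structure SubdivisionEmb (K : SimpleGraph U) (G : SimpleGraph V) where
  f : U → V
  inj : Function.Injective f
  walk : ∀ {a b : U}, K.Adj a b → G.Walk (f a) (f b)
  isPath : ∀ {a b : U} (h : K.Adj a b), (walk h).IsPath
  symmCompat : ∀ {a b : U} (h : K.Adj a b), walk h.symm = (walk h).reverse
  internal_disj : ∀ {a b c d : U} (h₁ : K.Adj a b) (h₂ : K.Adj c d), s(a, b) ≠ s(c, d) →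
    ∀ v, v ∈ (walk h₁).support → v ∈ (walk h₂).support →
      (v = f a ∨ v = f b) ∧ (v = f c ∨ v = f d)
  branch_only : ∀ {a b : U} (h : K.Adj a b) (u : U), f u ∈ (walk h).support → u = a ∨ u = b

/-- The set of vertices of the subdivision. -/
def SubSupport {K : SimpleGraph U} {G : SimpleGraph V} (s : SubdivisionEmb K G) : Set V :=
  {v | ∃ (a b : U) (h : K.Adj a b), v ∈ (s.walk h).support}

/-- The set of edges of the subdivision. -/
def SubEdges {K : SimpleGraph U} {G : SimpleGraph V} (s : SubdivisionEmb K G) : Set (Sym2 V) :=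
  {e | ∃ (a b : U) (h : K.Adj a b), e ∈ (s.walk h).edges}

/-! ### Blocks -/

/-- `B` is a block of `H`: a maximal connected vertex set without cutvertex. -/
def IsBlock (H : SimpleGraph W) (B : Set W) : Prop :=
  B.Nonempty ∧ (H.induce B).Preconnected ∧ (∀ v : W, (H.induce (B \ {v})).Preconnected) ∧
  ∀ B' : Set W, B ⊆ B' →
    ((H.induce B').Preconnected ∧ ∀ v : W, (H.induce (B' \ {v})).Preconnected) → B' = B

/-! ### Bridges of a cycle -/

/-- The `C`-bridge generated by a set `K` of vertices (the component) : `K` together with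
all edges leaving `K` and their endpoints. -/
def bridgeOf (G : SimpleGraph V) (K : Set V) : G.Subgraph where
  verts := K ∪ {v | ∃ u ∈ K, G.Adj u v}
  Adj a b := G.Adj a b ∧ (a ∈ K ∨ b ∈ K)
  adj_sub h := h.1
  edge_vert := by
    rintro a b ⟨h, ha | hb⟩
    · exact Or.inl ha
    · exact Or.inr ⟨b, hb, h.symm⟩
  symm := by
    constructor
    rintro a b ⟨h, hab⟩
    exact ⟨h.symm, hab.symm⟩

/-- `B` is a `C`-bridge in `G`, for a closed walk `C`: either a chord of `C`, or a connected
component of `G - V(C)` together with all edges joining it to `C`. -/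
def IsCBridge {r : V} (G : SimpleGraph V) (C : G.Walk r r) (B : G.Subgraph) : Prop :=
  (∃ (a b : V) (h : G.Adj a b), a ∈ C.support ∧ b ∈ C.support ∧ s(a, b) ∉ C.edges ∧
      B = G.subgraphOfAdj h) ∨
  (∃ c : (G.induce {v | v ∉ C.support}).ConnectedComponent,
      B = bridgeOf G (Subtype.val '' c.supp))

/-- The attachments of a `C`-bridge `B`. -/
def attachments {G : SimpleGraph V} {r : V} (C : G.Walk r r) (B : G.Subgraph) : Set V :=
  B.verts ∩ {v | v ∈ C.support}

/-- The vertex set of the segment `C[u,v]` of the closed walk `C` from `u` to `v` (in the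
orientation of `C`). -/
def segSet [DecidableEq V] {r : V} (G : SimpleGraph V) (C : G.Walk r r) (u v : V) : Set V :=
  {w | ∃ (hu : u ∈ C.support) (hv : v ∈ (C.rotate u hu).support),
    w ∈ ((C.rotate u hu).takeUntil v hv).support}

/-- Two `C`-bridges avoid each other. -/
def Avoid [DecidableEq V] {r : V} (G : SimpleGraph V) (C : G.Walk r r)
    (B₁ B₂ : G.Subgraph) : Prop :=
  ∃ u v, u ∈ C.support ∧ v ∈ C.support ∧
    attachments C B₁ ⊆ segSet G C u v ∧ attachments C B₂ ⊆ segSet G C v u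

/-- Two `C`-bridges overlap. -/
def Overlap [DecidableEq V] {r : V} (G : SimpleGraph V) (C : G.Walk r r)
    (B₁ B₂ : G.Subgraph) : Prop := ¬ Avoid G C B₁ B₂

/-! ### The classes `A^k_{xy}` and their obstructions -/

/-- Contraction of the edge `uv` of `G`: `v` is merged into `u` (and becomes isolated). -/
def contractEdge (G : SimpleGraph V) (u v : V) : SimpleGraph V :=
  SimpleGraph.fromRel (fun a b => a ≠ v ∧ b ≠ v ∧
    (G.Adj a b ∨ (a = u ∧ G.Adj v b) ∨ (b = u ∧ G.Adj a v)))

/-- The class `A^k_{xy}`: `G` embeds in the orientable surface of genus `k-1`, or `G` is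
`xy`-alternating on the orientable surface of genus `k`. -/
def Akxy (G : SimpleGraph V) (x y : V) (k : ℕ) : Prop :=
  GenusLE G (k - 1) ∨ AltEmb G x y k

/-- `G` (with terminals `x, y`) is an obstruction for the class `A^k_{xy}`: it is not in the
class, but every deletion and every allowed contraction (one which does not identify the two
terminals) is. -/
def MinimalNotAk (G : SimpleGraph V) (x y : V) (k : ℕ) : Prop :=
  ¬ Akxy G x y k ∧
  (∀ e ∈ G.edgeSet, Akxy (G.deleteEdges {e}) x y k) ∧
  (∀ u v, G.Adj u v → v ≠ x → v ≠ y → Akxy (contractEdge G u v) x y k)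

/-! ### Cyclic label sequences -/

/-- The number of transitions between consecutive entries of a list. -/
def listTrans (w : List Bool) : ℕ := ((w.zip w.tail).filter (fun p => p.1 ≠ p.2)).length

/-- The number of transitions of a list, viewed as a cyclic sequence. -/
def cycTrans : List Bool → ℕ
  | [] => 0
  | a :: t => listTrans ((a :: t) ++ [a])

/-- The cyclic sequence of labelled vertices (labels are subsets of `{X, Y}`, with
`true = X`, `false = Y`) contains six distinct vertices, in this cyclic order or its
reverse, whose labels contain `X, Y, X, Y, X, Y` respectively. -/
def HasXYXYXY (n : ℕ) (lab : ZMod (n + 1) → Finset Bool) : Prop :=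
  ∃ (s : ZMod (n + 1)) (a : Fin 6 → ℕ) (ε : Bool), StrictMono a ∧ a 5 ≤ n ∧
    ∀ k : Fin 6, (decide (k.val % 2 = 0)) ∈
      lab (s + (if ε then ((a k : ℕ) : ZMod (n + 1)) else -((a k : ℕ) : ZMod (n + 1))))

/-- `L` arranges the labels of each vertex of the cyclic sequence into a list (each label
used exactly once). -/
def IsArrangement (n : ℕ) (lab : ZMod (n + 1) → Finset Bool)
    (L : ZMod (n + 1) → List Bool) : Prop :=
  ∀ i, (L i).Nodup ∧ (L i).toFinset = lab i

/-- The cyclic label sequence obtained by concatenating the arranged labels in the cyclic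
order of the vertices. -/
def arranged (n : ℕ) (L : ZMod (n + 1) → List Bool) : List Bool :=
  (List.ofFn (fun j : Fin (n + 1) => L ((j : ℕ) : ZMod (n + 1)))).flatten

end AltPaper



open Equiv Equiv.Perm

namespace AltAux

set_option linter.unusedSectionVars false
set_option linter.unnecessarySimpa false

open scoped Classical

variable {α : Type*} [Finite α]

noncomputable def orbCount (f : Perm α) : ℕ :=
  Nat.card (MulAction.orbitRel.Quotient (Subgroup.zpowers f) α)

lemma sameCycle_iff_natpow (f : Perm α) (a b : α) :
    f.SameCycle a b ↔ ∃ n : ℕ, (f ^ n) a = b := by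
  constructor
  · intro h
    obtain ⟨i, _, hi⟩ := h.exists_pow_eq'
    exact ⟨i, hi⟩
  · rintro ⟨n, rfl⟩
    exact ⟨(n : ℤ), by simp [zpow_natCast]⟩

lemma mk_eq_mk_iff (f : Perm α) (a b : α) :
    (Quotient.mk'' a : MulAction.orbitRel.Quotient (Subgroup.zpowers f) α) = Quotient.mk'' b
      ↔ f.SameCycle a b := by
  rw [Quotient.eq'']
  rw [MulAction.orbitRel_apply, MulAction.mem_orbit_iff]
  constructor
  · rintro ⟨⟨g, hg⟩, hgb⟩
    rw [Subgroup.mem_zpowers_iff] at hg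
    obtain ⟨k, rfl⟩ := hg
    exact (Equiv.Perm.SameCycle.symm ⟨k, hgb⟩)
  · intro h
    obtain ⟨k, hk⟩ := h.symm
    exact ⟨⟨f ^ k, ⟨k, rfl⟩⟩, hk⟩

lemma mk_eq_mk_of_natpow (f : Perm α) (a : α) (n : ℕ) :
    (Quotient.mk'' a : MulAction.orbitRel.Quotient (Subgroup.zpowers f) α)
      = Quotient.mk'' ((f ^ n) a) :=
  (mk_eq_mk_iff f a _).2 ((sameCycle_iff_natpow f a _).2 ⟨n, rfl⟩)

/-- The setoid merging the `σ`-classes of `p` and `q`. -/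
def mergeSetoid (σ : Perm α) (p q : α) : Setoid α where
  r a b := σ.SameCycle a b ∨
    ((σ.SameCycle a p ∨ σ.SameCycle a q) ∧ (σ.SameCycle b p ∨ σ.SameCycle b q))
  iseqv := by
    constructor
    · intro a; exact Or.inl (Equiv.Perm.SameCycle.refl σ a)
    · rintro a b (h | ⟨h1, h2⟩)
      · exact Or.inl h.symm
      · exact Or.inr ⟨h2, h1⟩
    · rintro a b c (hab | ⟨ha, hb⟩) (hbc | ⟨hb', hc⟩)
      · exact Or.inl (hab.trans hbc)
      · exact Or.inr ⟨hb'.imp hab.trans hab.trans, hc⟩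
      · exact Or.inr ⟨ha, hb.imp hbc.symm.trans hbc.symm.trans⟩
      · exact Or.inr ⟨ha, hc⟩

lemma merge_step (σ : Perm α) (p q : α) (a : α) :
    (mergeSetoid σ p q) a ((σ * Equiv.swap p q) a) := by
  by_cases hap : a = p
  · rw [hap]
    refine Or.inr ⟨Or.inl (Equiv.Perm.SameCycle.refl σ p), ?_⟩
    simp only [Equiv.Perm.mul_apply, Equiv.swap_apply_left]
    exact Or.inr (Equiv.Perm.SameCycle.symm ⟨1, by simp⟩)
  · by_cases haq : a = q
    · rw [haq]
      refine Or.inr ⟨Or.inr (Equiv.Perm.SameCycle.refl σ q), ?_⟩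
      simp only [Equiv.Perm.mul_apply, Equiv.swap_apply_right]
      exact Or.inl (Equiv.Perm.SameCycle.symm ⟨1, by simp⟩)
    · left
      have : (σ * Equiv.swap p q) a = σ a := by
        simp [Equiv.Perm.mul_apply, Equiv.swap_apply_of_ne_of_ne hap haq]
      rw [this]
      exact ⟨1, by simp⟩

lemma merge_pow (σ : Perm α) (p q : α) (a : α) (n : ℕ) :
    (mergeSetoid σ p q) a (((σ * Equiv.swap p q) ^ n) a) := by
  induction n with
  | zero => simpa using (mergeSetoid σ p q).refl a
  | succ n ih =>
      have h1 := merge_step σ p q (((σ * Equiv.swap p q) ^ n) a)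
      have : ((σ * Equiv.swap p q) ^ (n + 1)) a
          = (σ * Equiv.swap p q) (((σ * Equiv.swap p q) ^ n) a) := by
        rw [pow_succ']; rfl
      rw [this]
      exact (mergeSetoid σ p q).trans ih h1

/-- Lemma A: multiplying by a transposition decreases the orbit count by at most one. -/
lemma orbCount_le (σ : Perm α) (p q : α) :
    orbCount σ ≤ orbCount (σ * Equiv.swap p q) + 1 := by
  set τ := Equiv.swap p q
  set S := mergeSetoid σ p q
  have hsub : ∀ a b : α, (σ * τ).SameCycle a b → S a b := by
    intro a b hab
    obtain ⟨n, rfl⟩ := (sameCycle_iff_natpow _ a b).1 hab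
    exact merge_pow σ p q a n
  let F : MulAction.orbitRel.Quotient (Subgroup.zpowers σ) α → Option (Quotient S) :=
    Quotient.lift (fun a => if σ.SameCycle a q then none else some (Quotient.mk S a))
      (by
        intro a b hab
        replace hab : σ.SameCycle a b := by
          rw [← mk_eq_mk_iff σ a b]
          exact Quotient.sound hab
        by_cases h : σ.SameCycle a q
        · simp [h, hab.symm.trans h]
        · have hb : ¬ σ.SameCycle b q := fun hb => h (hab.trans hb)
          simp only [h, hb, if_false]
          exact congrArg some (Quotient.sound (Or.inl hab)))
  have hFinj : Function.Injective F := by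
    intro x y
    induction x using Quotient.inductionOn' with
    | h a =>
    induction y using Quotient.inductionOn' with
    | h b =>
    intro hxy
    by_cases ha : σ.SameCycle a q <;> by_cases hb : σ.SameCycle b q
    · exact (mk_eq_mk_iff σ a b).2 (ha.trans hb.symm)
    · exfalso; simp [F, ha, hb] at hxy
    · exfalso; simp [F, ha, hb] at hxy
    · simp only [F, Quotient.lift_mk, ha, hb, if_false, Option.some.injEq] at hxy
      have hS : S a b := Quotient.exact hxy
      rcases hS with h | ⟨h1, h2⟩
      · exact (mk_eq_mk_iff σ a b).2 h
      · rcases h1 with h1 | h1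
        · rcases h2 with h2 | h2
          · exact (mk_eq_mk_iff σ a b).2 (h1.trans h2.symm)
          · exact absurd h2 hb
        · exact absurd h1 ha
  let Gm : MulAction.orbitRel.Quotient (Subgroup.zpowers (σ * τ)) α → Quotient S :=
    Quotient.lift (fun a => Quotient.mk S a)
      (by
        intro a b hab
        replace hab : (σ * τ).SameCycle a b := by
          rw [← mk_eq_mk_iff (σ * τ) a b]
          exact Quotient.sound hab
        exact Quotient.sound (hsub a b hab))
  have hGsurj : Function.Surjective Gm := by
    intro x
    induction x using Quotient.inductionOn' with
    | h a => exact ⟨Quotient.mk'' a, rfl⟩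
  haveI : Finite (Quotient S) := Quotient.finite _
  haveI := Fintype.ofFinite (Quotient S)
  calc orbCount σ ≤ Nat.card (Option (Quotient S)) := Nat.card_le_card_of_injective F hFinj
    _ = Nat.card (Quotient S) + 1 := by
        rw [Nat.card_eq_fintype_card, Nat.card_eq_fintype_card, Fintype.card_option]
    _ ≤ orbCount (σ * τ) + 1 := by
        have h2 : Nat.card (Quotient S) ≤ orbCount (σ * τ) :=
          Nat.card_le_card_of_surjective Gm hGsurj
        omega

lemma pow_fix_mul (σ : Perm α) (x : α) (n : ℕ) (hn : (σ ^ n) x = x) (s : ℕ) :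
    (σ ^ (n * s)) x = x := by
  induction s with
  | zero => simp
  | succ s ih =>
      have h : n * (s + 1) = n * s + n := by ring
      rw [h, pow_add, Equiv.Perm.mul_apply, hn, ih]

lemma pow_fix_mod (σ : Perm α) (x : α) (n : ℕ) (hn : (σ ^ n) x = x) (m : ℕ) :
    (σ ^ m) x = (σ ^ (m % n)) x := by
  conv_lhs => rw [← Nat.mod_add_div m n]
  rw [pow_add, Equiv.Perm.mul_apply, pow_fix_mul σ x n hn]

/-- If `p` and `q` are on a common cycle of `σ`, they are on different cycles
of `σ * swap p q`. -/
lemma not_sameCycle_mul_swap (σ : Perm α) (p q : α) (hpq : p ≠ q)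
    (hc : σ.SameCycle p q) : ¬ (σ * Equiv.swap p q).SameCycle p q := by
  intro hs
  set c := σ * Equiv.swap p q with hcdef
  obtain ⟨n, hn⟩ := (sameCycle_iff_natpow c p q).1 hs
  have hex : ∃ n, 0 < n ∧ (c ^ n) p = q := by
    refine ⟨n, ?_, hn⟩
    rcases Nat.eq_zero_or_pos n with h | h
    · exfalso; apply hpq; simpa [h] using hn
    · exact h
  let n₀ := Nat.find hex
  obtain ⟨hn₀pos, hn₀⟩ : 0 < n₀ ∧ (c ^ n₀) p = q := Nat.find_spec hex
  have hmin : ∀ k, k < n₀ → ¬ (0 < k ∧ (c ^ k) p = q) := fun k hk => Nat.find_min hex hk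
  have hne_q : ∀ k, 0 < k → k < n₀ → (c ^ k) p ≠ q := by
    intro k hk1 hk2 h
    exact hmin k hk2 ⟨hk1, h⟩
  have hne_p : ∀ k, 0 < k → k < n₀ → (c ^ k) p ≠ p := by
    intro k hk1 hk2 h
    have h2 : (c ^ (n₀ - k + k)) p = q := by
      rw [Nat.sub_add_cancel (le_of_lt hk2)]; exact hn₀
    rw [pow_add, Equiv.Perm.mul_apply, h] at h2
    exact hmin (n₀ - k) (by omega) ⟨by omega, h2⟩
  have key : ∀ j, 1 ≤ j → j ≤ n₀ → (σ ^ j) q = (c ^ j) p := by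
    intro j hj1 hj2
    induction j with
    | zero => omega
    | succ j ih =>
        rcases Nat.eq_zero_or_pos j with hj0 | hjpos
        · subst hj0
          simp [hcdef, Equiv.Perm.mul_apply, Equiv.swap_apply_left]
        · have hih := ih (by omega) (by omega)
          have hfix : Equiv.swap p q ((c ^ j) p) = (c ^ j) p :=
            Equiv.swap_apply_of_ne_of_ne (hne_p j hjpos (by omega)) (hne_q j hjpos (by omega))
          calc (σ ^ (j + 1)) q = σ ((σ ^ j) q) := by rw [pow_succ']; rfl
            _ = σ ((c ^ j) p) := by rw [hih]
            _ = c ((c ^ j) p) := by rw [hcdef, Equiv.Perm.mul_apply, hfix]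
            _ = (c ^ (j + 1)) p := by rw [pow_succ']; rfl
  have hqfix : (σ ^ n₀) q = q := by rw [key n₀ hn₀pos (le_refl _), hn₀]
  obtain ⟨m, hm⟩ := (sameCycle_iff_natpow σ q p).1 hc.symm
  rw [pow_fix_mod σ q n₀ hqfix m] at hm
  rcases Nat.eq_zero_or_pos (m % n₀) with h0 | hpos
  · rw [h0] at hm; simp at hm; exact hpq hm.symm
  · have hlt : m % n₀ < n₀ := Nat.mod_lt m hn₀pos
    rw [key (m % n₀) hpos (le_of_lt hlt)] at hm
    exact hne_p (m % n₀) hpos hlt hm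

/-- Lemma B: multiplying by a transposition within a cycle splits it. -/
lemma orbCount_add_one_le (σ : Perm α) (p q : α) (hpq : p ≠ q) (hc : σ.SameCycle p q) :
    orbCount σ + 1 ≤ orbCount (σ * Equiv.swap p q) := by
  set c := σ * Equiv.swap p q with hcdef
  have agree : ∀ a : α, ¬ σ.SameCycle a q → ∀ n : ℕ, (c ^ n) a = (σ ^ n) a := by
    intro a ha n
    induction n with
    | zero => simp
    | succ n ih =>
        have hsc : σ.SameCycle a ((σ ^ n) a) := ⟨(n : ℤ), by simp [zpow_natCast]⟩
        have hnp : (σ ^ n) a ≠ p := by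
          intro h
          rw [h] at hsc
          exact ha (hsc.trans hc)
        have hnq : (σ ^ n) a ≠ q := by
          intro h
          rw [h] at hsc
          exact ha hsc
        calc (c ^ (n+1)) a = c ((c ^ n) a) := by rw [pow_succ']; rfl
          _ = c ((σ ^ n) a) := by rw [ih]
          _ = σ (Equiv.swap p q ((σ ^ n) a)) := rfl
          _ = σ ((σ ^ n) a) := by rw [Equiv.swap_apply_of_ne_of_ne hnp hnq]
          _ = (σ ^ (n+1)) a := by rw [pow_succ']; rfl
  have transfer : ∀ a b : α, ¬ σ.SameCycle a q → c.SameCycle a b → σ.SameCycle a b := by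
    intro a b ha hab
    obtain ⟨n, rfl⟩ := (sameCycle_iff_natpow c a b).1 hab
    rw [agree a ha n]
    exact ⟨(n : ℤ), by simp [zpow_natCast]⟩
  let F : Option (MulAction.orbitRel.Quotient (Subgroup.zpowers σ) α) →
      MulAction.orbitRel.Quotient (Subgroup.zpowers c) α :=
    fun x => x.elim (Quotient.mk'' q)
      (Quotient.lift (fun a => if σ.SameCycle a q then (Quotient.mk'' p :
          MulAction.orbitRel.Quotient (Subgroup.zpowers c) α) else Quotient.mk'' a)
        (by
          intro a b hab
          replace hab : σ.SameCycle a b := by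
            rw [← mk_eq_mk_iff σ a b]; exact Quotient.sound hab
          by_cases h : σ.SameCycle a q
          · simp [h, hab.symm.trans h]
          · have hb : ¬ σ.SameCycle b q := fun hb => h (hab.trans hb)
            simp only [h, hb, if_false]
            refine (mk_eq_mk_iff c a b).2 ?_
            obtain ⟨n, rfl⟩ := (sameCycle_iff_natpow σ a b).1 hab
            exact ⟨(n : ℤ), by simp [zpow_natCast, agree a h n]⟩))
  have fact1 : ∀ b, ¬ σ.SameCycle b q → ¬ c.SameCycle b q :=
    fun b hb h => hb (transfer b q hb h)
  have fact2 : ∀ b, ¬ σ.SameCycle b q → ¬ c.SameCycle b p :=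
    fun b hb h => hb ((transfer b p hb h).trans hc)
  have fact3 : ¬ c.SameCycle p q := not_sameCycle_mul_swap σ p q hpq hc
  have hFinj : Function.Injective F := by
    intro x y
    match x, y with
    | none, none => intro _; rfl
    | none, some yy =>
        induction yy using Quotient.inductionOn' with
        | h b =>
        intro hxy
        exfalso
        simp only [F, Option.elim, Quotient.lift_mk] at hxy
        by_cases hb : σ.SameCycle b q
        · rw [if_pos hb] at hxy
          exact fact3 (((mk_eq_mk_iff c q p).1 hxy).symm)
        · rw [if_neg hb] at hxy
          exact fact1 b hb ((mk_eq_mk_iff c q b).1 hxy).symm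
    | some xx, none =>
        induction xx using Quotient.inductionOn' with
        | h b =>
        intro hxy
        exfalso
        simp only [F, Option.elim, Quotient.lift_mk] at hxy
        by_cases hb : σ.SameCycle b q
        · rw [if_pos hb] at hxy
          exact fact3 ((mk_eq_mk_iff c p q).1 hxy)
        · rw [if_neg hb] at hxy
          exact fact1 b hb ((mk_eq_mk_iff c b q).1 hxy)
    | some xx, some yy =>
        induction xx using Quotient.inductionOn' with
        | h a =>
        induction yy using Quotient.inductionOn' with
        | h b =>
        intro hxy
        simp only [F, Option.elim, Quotient.lift_mk] at hxy
        congr 1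
        by_cases ha : σ.SameCycle a q <;> by_cases hb : σ.SameCycle b q
        · exact (mk_eq_mk_iff σ a b).2 (ha.trans hb.symm)
        · rw [if_pos ha, if_neg hb] at hxy
          exact absurd ((mk_eq_mk_iff c p b).1 hxy).symm (fact2 b hb)
        · rw [if_neg ha, if_pos hb] at hxy
          exact absurd ((mk_eq_mk_iff c a p).1 hxy) (fact2 a ha)
        · rw [if_neg ha, if_neg hb] at hxy
          exact (mk_eq_mk_iff σ a b).2 (transfer a b ha ((mk_eq_mk_iff c a b).1 hxy))
  haveI : Finite (MulAction.orbitRel.Quotient (Subgroup.zpowers σ) α) := Quotient.finite _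
  haveI := Fintype.ofFinite (MulAction.orbitRel.Quotient (Subgroup.zpowers σ) α)
  have h1 : Nat.card (Option (MulAction.orbitRel.Quotient (Subgroup.zpowers σ) α))
      ≤ orbCount c := Nat.card_le_card_of_injective F hFinj
  have h2 : Nat.card (Option (MulAction.orbitRel.Quotient (Subgroup.zpowers σ) α))
      = orbCount σ + 1 := by
    rw [Nat.card_eq_fintype_card, Fintype.card_option]
    rw [orbCount, Nat.card_eq_fintype_card]
  omega

section Skip

variable {β : Type*} [Finite β]

/-- Lemma C: orbit count is preserved under deleting two points that are
"skipped" by the permutation `h` relative to `g`. -/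
lemma orbCount_skip (ι : β → α) (hι : Function.Injective ι) (p q : α)
    (hrange : Set.range ι = ({p, q} : Set α)ᶜ)
    (g : Perm β) (h : Perm α)
    (hstep : ∀ d, h (ι d) = ι (g d) ∨
      ((h (ι d) = p ∨ h (ι d) = q) ∧ h (h (ι d)) = ι (g d)))
    (hp : h p ∈ Set.range ι) (hq : h q ∈ Set.range ι) :
    orbCount g = orbCount h := by
  have hmem : ∀ d, ι d ≠ p ∧ ι d ≠ q := by
    intro d
    have hd : ι d ∈ Set.range ι := ⟨d, rfl⟩
    rw [hrange] at hd
    simp only [Set.mem_compl_iff, Set.mem_insert_iff, Set.mem_singleton_iff, not_or] at hd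
    exact hd
  have hrel : ∀ d, h.SameCycle (ι d) (ι (g d)) := by
    intro d
    rcases hstep d with h1 | ⟨_, h2⟩
    · exact ⟨1, by simpa using h1⟩
    · refine (sameCycle_iff_natpow h _ _).2 ⟨2, ?_⟩
      rw [pow_two, Equiv.Perm.mul_apply, h2]
  have hrelpow : ∀ (n : ℕ) d, h.SameCycle (ι d) (ι ((g ^ n) d)) := by
    intro n d
    induction n with
    | zero => simpa using Equiv.Perm.SameCycle.refl h (ι d)
    | succ n ih =>
        have : ((g ^ (n+1)) d) = g ((g ^ n) d) := by rw [pow_succ']; rfl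
        rw [this]
        exact ih.trans (hrel ((g ^ n) d))
  have hdesc : ∀ n : ℕ, ∀ d e, (h ^ n) (ι d) = ι e → ∃ m : ℕ, (g ^ m) d = e := by
    intro n
    induction n using Nat.strong_induction_on with
    | _ n IH =>
      intro d e hde
      rcases Nat.eq_zero_or_pos n with rfl | hn
      · exact ⟨0, by simpa using (hι (by simpa using hde)).symm ▸ rfl⟩
      · rcases hstep d with h1 | ⟨hz, h2⟩
        · have hrw : (h ^ (n-1)) (ι (g d)) = ι e := by
            rw [← h1]
            have h3 : (h ^ n) (ι d) = (h ^ (n-1)) (h (ι d)) := by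
              conv_lhs => rw [show n = (n-1)+1 by omega]
              rw [pow_succ, Equiv.Perm.mul_apply]
            rw [← h3, hde]
          obtain ⟨m, hm⟩ := IH (n-1) (by omega) (g d) e hrw
          exact ⟨m+1, by rw [pow_succ, Equiv.Perm.mul_apply, hm]⟩
        · rcases Nat.lt_or_ge n 2 with hn2 | hn2
          · -- n = 1 : contradiction
            have hn1 : n = 1 := by omega
            rw [hn1, pow_one] at hde
            exfalso
            rcases hz with hz | hz
            · exact (hmem e).1 (by rw [← hde, hz])
            · exact (hmem e).2 (by rw [← hde, hz])
          · have hrw : (h ^ (n-2)) (ι (g d)) = ι e := by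
              rw [← h2]
              have h3 : (h ^ n) (ι d) = (h ^ (n-2)) (h (h (ι d))) := by
                conv_lhs => rw [show n = (n-2)+2 by omega]
                rw [pow_add, Equiv.Perm.mul_apply, pow_two, Equiv.Perm.mul_apply]
              rw [← h3, hde]
            obtain ⟨m, hm⟩ := IH (n-2) (by omega) (g d) e hrw
            exact ⟨m+1, by rw [pow_succ, Equiv.Perm.mul_apply, hm]⟩
  let Ψ : MulAction.orbitRel.Quotient (Subgroup.zpowers g) β →
      MulAction.orbitRel.Quotient (Subgroup.zpowers h) α :=
    Quotient.lift (fun d => (Quotient.mk'' (ι d) :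
        MulAction.orbitRel.Quotient (Subgroup.zpowers h) α))
      (by
        intro d d' hdd
        replace hdd : g.SameCycle d d' := by
          rw [← mk_eq_mk_iff g d d']; exact Quotient.sound hdd
        obtain ⟨n, rfl⟩ := (sameCycle_iff_natpow g d d').1 hdd
        exact (mk_eq_mk_iff h _ _).2 (hrelpow n d))
  have hinj : Function.Injective Ψ := by
    intro x y
    induction x using Quotient.inductionOn' with
    | h d =>
    induction y using Quotient.inductionOn' with
    | h d' =>
    intro hxy
    have hsc : h.SameCycle (ι d) (ι d') := (mk_eq_mk_iff h _ _).1 hxy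
    obtain ⟨n, hn⟩ := (sameCycle_iff_natpow h _ _).1 hsc
    obtain ⟨m, hm⟩ := hdesc n d d' hn
    exact (mk_eq_mk_iff g d d').2 ((sameCycle_iff_natpow g d d').2 ⟨m, hm⟩)
  have hsurj : Function.Surjective Ψ := by
    intro x
    induction x using Quotient.inductionOn' with
    | h a =>
    by_cases ha : a ∈ Set.range ι
    · obtain ⟨d, rfl⟩ := ha
      exact ⟨Quotient.mk'' d, rfl⟩
    · have : a ∈ ({p, q} : Set α) := by
        by_contra hc
        exact ha (hrange ▸ hc)
      rcases this with rfl | rfl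
      · obtain ⟨d, hd⟩ := hp
        refine ⟨Quotient.mk'' d, ?_⟩
        show (Quotient.mk'' (ι d) : MulAction.orbitRel.Quotient (Subgroup.zpowers h) α) = _
        exact (mk_eq_mk_iff h _ _).2 (Equiv.Perm.SameCycle.symm ⟨1, by simpa using hd.symm⟩)
      · obtain ⟨d, hd⟩ := hq
        refine ⟨Quotient.mk'' d, ?_⟩
        show (Quotient.mk'' (ι d) : MulAction.orbitRel.Quotient (Subgroup.zpowers h) α) = _
        exact (mk_eq_mk_iff h _ _).2 (Equiv.Perm.SameCycle.symm ⟨1, by simpa using hd.symm⟩)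
  exact Nat.card_eq_of_bijective Ψ ⟨hinj, hsurj⟩

end Skip

section Components

noncomputable def compCount (f r : Perm α) : ℕ :=
  Nat.card (MulAction.orbitRel.Quotient (Subgroup.closure ({f, r} : Set (Perm α))) α)

lemma cmk_eq (f r : Perm α) (g : Perm α) (hg : g ∈ Subgroup.closure ({f, r} : Set (Perm α)))
    (a : α) :
    (Quotient.mk'' a :
      MulAction.orbitRel.Quotient (Subgroup.closure ({f, r} : Set (Perm α))) α)
      = Quotient.mk'' (g a) := by
  rw [Quotient.eq'', MulAction.orbitRel_apply, MulAction.mem_orbit_iff]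
  exact ⟨⟨g⁻¹, inv_mem hg⟩, by simp⟩

lemma closure_pair_rel (f r : Perm α) (S : Setoid α)
    (hf : ∀ a, S a (f a)) (hr : ∀ a, S a (r a)) (g : Perm α)
    (hg : g ∈ Subgroup.closure ({f, r} : Set (Perm α))) : ∀ a, S a (g a) := by
  induction hg using Subgroup.closure_induction with
  | mem x hx =>
      rcases hx with rfl | rfl
      · exact hf
      · exact hr
  | one => intro a; simpa using S.refl a
  | mul x y hx hy ihx ihy =>
      intro a
      have h1 := ihy a
      have h2 := ihx (y a)
      exact S.trans h1 (by simpa [Equiv.Perm.mul_apply] using h2)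
  | inv x hx ih =>
      intro a
      have h1 := ih (x⁻¹ a)
      have h2 : x (x⁻¹ a) = a := by simp
      rw [h2] at h1
      exact S.symm h1

variable {β : Type*} [Finite β]

lemma compCount_le (f r : Perm α) (f' r' : Perm β) (m : β → α)
    (h1 : ∀ b, (Quotient.mk'' (m b) :
        MulAction.orbitRel.Quotient (Subgroup.closure ({f, r} : Set (Perm α))) α)
        = Quotient.mk'' (m (f' b)))
    (h2 : ∀ b, (Quotient.mk'' (m b) :
        MulAction.orbitRel.Quotient (Subgroup.closure ({f, r} : Set (Perm α))) α)
        = Quotient.mk'' (m (r' b)))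
    (hsurj : ∀ a : α, ∃ b : β, (Quotient.mk'' a :
        MulAction.orbitRel.Quotient (Subgroup.closure ({f, r} : Set (Perm α))) α)
        = Quotient.mk'' (m b)) :
    compCount f r ≤ compCount f' r' := by
  let S : Setoid β := {
    r := fun b b' => (Quotient.mk'' (m b) :
        MulAction.orbitRel.Quotient (Subgroup.closure ({f, r} : Set (Perm α))) α)
        = Quotient.mk'' (m b')
    iseqv := ⟨fun _ => rfl, fun h => h.symm, fun h h' => h.trans h'⟩ }
  let Φ : MulAction.orbitRel.Quotient (Subgroup.closure ({f', r'} : Set (Perm β))) β →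
      MulAction.orbitRel.Quotient (Subgroup.closure ({f, r} : Set (Perm α))) α :=
    Quotient.lift (fun b => (Quotient.mk'' (m b) :
        MulAction.orbitRel.Quotient (Subgroup.closure ({f, r} : Set (Perm α))) α))
      (by
        intro b b' hbb
        have : b ∈ MulAction.orbit (Subgroup.closure ({f', r'} : Set (Perm β))) b' := by
          rw [← MulAction.orbitRel_apply]; exact hbb
        rw [MulAction.mem_orbit_iff] at this
        obtain ⟨⟨g, hg⟩, hgb⟩ := this
        have hstep := closure_pair_rel f' r' S h1 h2 g hg b'
        have hb : g b' = b := hgb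
        have : S b' b := by rw [← hb]; exact hstep
        exact (S.symm this : S b b'))
  have hΦsurj : Function.Surjective Φ := by
    intro x
    induction x using Quotient.inductionOn' with
    | h a =>
    obtain ⟨b, hb⟩ := hsurj a
    exact ⟨Quotient.mk'' b, hb.symm⟩
  exact Nat.card_le_card_of_surjective Φ hΦsurj

end Components

end AltAux

namespace AltAux
open AltPaper SimpleGraph
set_option linter.unusedSectionVars false
set_option linter.unusedVariables false

section GraphPart

variable {V : Type*} [Fintype V]

lemma pow_apply_fix {α : Type*} (σ : Equiv.Perm α) (a : α) (h : σ a = a) (n : ℕ) :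
    (σ ^ n) a = a := by
  induction n with
  | zero => rfl
  | succ n ih => rw [pow_succ', Equiv.Perm.mul_apply, ih]; exact h

lemma pow_succ_apply {α : Type*} (f : Equiv.Perm α) (n : ℕ) (x : α) :
    (f ^ (n+1)) x = f ((f ^ n) x) := by rw [pow_succ']; rfl

lemma pow_succ_apply' {α : Type*} (f : Equiv.Perm α) (n : ℕ) (x : α) :
    (f ^ (n+1)) x = (f ^ n) (f x) := by rw [pow_succ]; rfl

lemma rot_pow_fst {G : SimpleGraph V} (R : RotSys G) (n : ℕ) :
    ∀ d : G.Dart, ((R.rot ^ n) d).fst = d.fst := by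
  induction n with
  | zero => intro d; rfl
  | succ n ih =>
      intro d
      rw [pow_succ', Equiv.Perm.mul_apply, R.fst_rot]
      exact ih d

lemma facePerm_apply {G : SimpleGraph V} (R : RotSys G) (e : G.Dart) :
    R.facePerm e = R.rot e.symm := rfl

/-- inclusion of the darts of `G - vw` into the darts of `G` -/
def emb (G : SimpleGraph V) (v w : V) (d : (G.deleteEdges {s(v,w)}).Dart) : G.Dart :=
  ⟨d.toProd, ((SimpleGraph.deleteEdges_adj).1 d.adj).1⟩

lemma emb_toProd (G : SimpleGraph V) (v w : V) (d : (G.deleteEdges {s(v,w)}).Dart) :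
    (emb G v w d).toProd = d.toProd := rfl

lemma emb_inj (G : SimpleGraph V) (v w : V) : Function.Injective (emb G v w) := by
  intro a b h
  have h2 := congrArg SimpleGraph.Dart.toProd h
  exact SimpleGraph.Dart.ext _ _ h2

lemma emb_fst (G : SimpleGraph V) (v w : V) (d : (G.deleteEdges {s(v,w)}).Dart) :
    (emb G v w d).fst = d.fst := rfl

lemma emb_symm (G : SimpleGraph V) (v w : V) (d : (G.deleteEdges {s(v,w)}).Dart) :
    emb G v w d.symm = (emb G v w d).symm :=
  SimpleGraph.Dart.ext _ _ rfl

variable {G : SimpleGraph V} {v w u : V}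

def dart0 (hvw : G.Adj v w) : G.Dart := ⟨(v,w), hvw⟩

def dart1 (hvw : G.Adj v w) : G.Dart := ⟨(w,v), hvw.symm⟩

lemma dart0_ne_dart1 (hvw : G.Adj v w) : dart0 hvw ≠ dart1 hvw := by
  intro h
  have := congrArg (fun d : G.Dart => d.fst) h
  exact hvw.ne this

lemma dart0_symm (hvw : G.Adj v w) : (dart0 hvw).symm = dart1 hvw :=
  SimpleGraph.Dart.ext _ _ rfl

lemma dart1_symm (hvw : G.Adj v w) : (dart1 hvw).symm = dart0 hvw :=
  SimpleGraph.Dart.ext _ _ rfl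

lemma emb_ne_dart0 (hvw : G.Adj v w) (d : (G.deleteEdges {s(v,w)}).Dart) :
    emb G v w d ≠ dart0 hvw := by
  intro h
  have hpr : d.toProd = (v, w) := congrArg SimpleGraph.Dart.toProd h
  have hadj := d.adj
  rw [SimpleGraph.deleteEdges_adj] at hadj
  apply hadj.2
  rw [show d.toProd.1 = v from congrArg Prod.fst hpr, show d.toProd.2 = w from congrArg Prod.snd hpr]
  rfl

lemma emb_ne_dart1 (hvw : G.Adj v w) (d : (G.deleteEdges {s(v,w)}).Dart) :
    emb G v w d ≠ dart1 hvw := by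
  intro h
  have hpr : d.toProd = (w, v) := congrArg SimpleGraph.Dart.toProd h
  have hadj := d.adj
  rw [SimpleGraph.deleteEdges_adj] at hadj
  apply hadj.2
  rw [show d.toProd.1 = w from congrArg Prod.fst hpr, show d.toProd.2 = v from congrArg Prod.snd hpr]
  simp only [Set.mem_singleton_iff]
  exact Sym2.eq_swap

lemma decomp (hvw : G.Adj v w) (e : G.Dart) :
    (∃ d, emb G v w d = e) ∨ e = dart0 hvw ∨ e = dart1 hvw := by
  by_cases h0 : e = dart0 hvw
  · exact Or.inr (Or.inl h0)
  by_cases h1 : e = dart1 hvw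
  · exact Or.inr (Or.inr h1)
  left
  have hne : ¬ s(e.toProd.1, e.toProd.2) ∈ ({s(v,w)} : Set (Sym2 V)) := by
    simp only [Set.mem_singleton_iff, Sym2.eq_iff]
    rintro (⟨ha, hb⟩ | ⟨ha, hb⟩)
    · exact h0 (SimpleGraph.Dart.ext _ _ (Prod.ext ha hb))
    · exact h1 (SimpleGraph.Dart.ext _ _ (Prod.ext ha hb))
  refine ⟨⟨e.toProd, ?_⟩, SimpleGraph.Dart.ext _ _ rfl⟩
  rw [SimpleGraph.deleteEdges_adj]
  exact ⟨e.adj, hne⟩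

lemma mem_range_emb_iff (hvw : G.Adj v w) (e : G.Dart) :
    e ∈ Set.range (emb G v w) ↔ e ≠ dart0 hvw ∧ e ≠ dart1 hvw := by
  constructor
  · rintro ⟨d, rfl⟩
    exact ⟨emb_ne_dart0 hvw d, emb_ne_dart1 hvw d⟩
  · rintro ⟨h0, h1⟩
    rcases decomp hvw e with ⟨d, rfl⟩ | h | h
    · exact ⟨d, rfl⟩
    · exact absurd h h0
    · exact absurd h h1

lemma range_emb (hvw : G.Adj v w) :
    Set.range (emb G v w) = ({dart0 hvw, dart1 hvw} : Set G.Dart)ᶜ := by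
  ext e
  rw [mem_range_emb_iff hvw]
  simp [not_or]

lemma adj_del (hvw : G.Adj v w) {a b : V} (hab : G.Adj a b)
    (h1 : ¬(a = v ∧ b = w)) (h2 : ¬(a = w ∧ b = v)) :
    (G.deleteEdges {s(v,w)}).Adj a b := by
  rw [SimpleGraph.deleteEdges_adj]
  refine ⟨hab, ?_⟩
  simp only [Set.mem_singleton_iff, Sym2.eq_iff]
  tauto

lemma edge_count (hvw : G.Adj v w) :
    Nat.card G.edgeSet = Nat.card (G.deleteEdges {s(v,w)}).edgeSet + 1 := by
  rw [SimpleGraph.edgeSet_deleteEdges]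
  rw [Nat.card_coe_set_eq, Nat.card_coe_set_eq]
  have hmem : s(v,w) ∈ G.edgeSet := hvw
  have := Set.ncard_diff_singleton_add_one hmem (Set.toFinite _)
  omega

lemma numVerts_eq {H : SimpleGraph V} (R : RotSys H) :
    R.numVerts = Nat.card (Set.range (fun d : H.Dart => d.fst)) := by
  haveI : Finite H.Dart := Finite.of_injective _ SimpleGraph.Dart.toProd_injective
  let Φ : MulAction.orbitRel.Quotient (Subgroup.zpowers R.rot) H.Dart →
      Set.range (fun d : H.Dart => d.fst) :=
    Quotient.lift (fun d => (⟨d.fst, ⟨d, rfl⟩⟩ : Set.range (fun d : H.Dart => d.fst)))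
      (by
        intro d d' hdd
        have hsc : R.rot.SameCycle d d' := by
          rw [← mk_eq_mk_iff R.rot d d']
          exact Quotient.sound hdd
        obtain ⟨n, rfl⟩ := (sameCycle_iff_natpow R.rot d d').1 hsc
        exact Subtype.ext (rot_pow_fst R n d).symm)
  have hinj : Function.Injective Φ := by
    intro x y
    induction x using Quotient.inductionOn' with
    | h d =>
    induction y using Quotient.inductionOn' with
    | h d' =>
    intro hxy
    have hfst : d.fst = d'.fst := congrArg Subtype.val hxy
    obtain ⟨n, hn⟩ := R.orbit_full d d' hfst
    exact (mk_eq_mk_iff R.rot d d').2 ((sameCycle_iff_natpow R.rot d d').2 ⟨n, hn⟩)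
  have hsurj : Function.Surjective Φ := by
    rintro ⟨x, d, rfl⟩
    exact ⟨Quotient.mk'' d, rfl⟩
  exact Nat.card_eq_of_bijective Φ ⟨hinj, hsurj⟩

lemma range_fst_eq (hvw : G.Adj v w) (hvu : G.Adj v u) (hwu : G.Adj w u) :
    Set.range (fun d : (G.deleteEdges {s(v,w)}).Dart => d.fst)
      = Set.range (fun d : G.Dart => d.fst) := by
  have huw : u ≠ w := fun h => (hwu.ne) h.symm
  have huv : u ≠ v := fun h => (hvu.ne) h.symm
  ext x
  constructor
  · rintro ⟨d, rfl⟩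
    exact ⟨emb G v w d, rfl⟩
  · rintro ⟨e, rfl⟩
    rcases decomp hvw e with ⟨d, rfl⟩ | h | h
    · exact ⟨d, rfl⟩
    · subst h
      exact ⟨⟨(v, u), adj_del hvw hvu (fun hh => huw hh.2) (fun hh => hvw.ne hh.1)⟩, rfl⟩
    · subst h
      exact ⟨⟨(w, u), adj_del hvw hwu (fun hh => hvw.ne hh.1.symm) (fun hh => huv hh.2)⟩, rfl⟩

end GraphPart
end AltAux

namespace AltAux
open AltPaper SimpleGraph
set_option linter.unusedSectionVars false
set_option linter.unusedVariables false
set_option maxHeartbeats 1000000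

section Delete

variable {V : Type*} [Fintype V] {G : SimpleGraph V} {v w u : V}

lemma genusLE_delete (hvw : G.Adj v w) (hvu : G.Adj v u) (hwu : G.Adj w u) (k : ℕ)
    (hgen : GenusLE G k) : GenusLE (G.deleteEdges {s(v,w)}) k := by
  classical
  obtain ⟨R, hR⟩ := hgen
  letI : DecidableEq G.Dart := Classical.decEq _
  haveI : Finite G.Dart := Finite.of_injective _ SimpleGraph.Dart.toProd_injective
  haveI : Finite (G.deleteEdges {s(v,w)}).Dart :=
    Finite.of_injective _ SimpleGraph.Dart.toProd_injective
  have huv : u ≠ v := fun h => hvu.ne h.symm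
  have huw : u ≠ w := fun h => hwu.ne h.symm
  set d₀ := dart0 hvw with hd₀def
  set d₁ := dart1 hvw with hd₁def
  have hne01 : d₀ ≠ d₁ := dart0_ne_dart1 hvw
  -- darts of G - vw
  let av : (G.deleteEdges {s(v,w)}).Dart :=
    ⟨(v,u), adj_del hvw hvu (fun hh => huw hh.2) (fun hh => hvw.ne hh.1)⟩
  let aw : (G.deleteEdges {s(v,w)}).Dart :=
    ⟨(w,u), adj_del hvw hwu (fun hh => hvw.ne hh.1.symm) (fun hh => huv hh.2)⟩
  let e₁ : (G.deleteEdges {s(v,w)}).Dart :=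
    ⟨(u,v), adj_del hvw (hvu.symm) (fun hh => huv hh.1) (fun hh => huw hh.1)⟩
  let e₂ : (G.deleteEdges {s(v,w)}).Dart :=
    ⟨(u,w), adj_del hvw (hwu.symm) (fun hh => huv hh.1) (fun hh => huw hh.1)⟩
  have hav_fst : av.fst = v := rfl
  have haw_fst : aw.fst = w := rfl
  -- basic facts about R.rot on the special darts
  have hrot0_ne0 : R.rot d₀ ≠ d₀ := by
    intro h
    obtain ⟨n, hn⟩ := R.orbit_full d₀ ⟨(v,u), hvu⟩ rfl
    rw [pow_apply_fix R.rot d₀ h n] at hn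
    have h2 := congrArg (fun e : G.Dart => e.snd) hn
    exact huw (h2.symm)
  have hrot1_ne1 : R.rot d₁ ≠ d₁ := by
    intro h
    obtain ⟨n, hn⟩ := R.orbit_full d₁ ⟨(w,u), hwu⟩ rfl
    rw [pow_apply_fix R.rot d₁ h n] at hn
    have h2 := congrArg (fun e : G.Dart => e.snd) hn
    exact huv (h2.symm)
  have hrot0_ne1 : R.rot d₀ ≠ d₁ := by
    intro h
    have h2 := R.fst_rot d₀
    rw [h] at h2
    exact hvw.ne h2.symm
  have hrot1_ne0 : R.rot d₁ ≠ d₀ := by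
    intro h
    have h2 := R.fst_rot d₁
    rw [h] at h2
    exact hvw.ne h2
  have hrot_inj_ne : R.rot d₀ ≠ R.rot d₁ := fun h => hne01 (R.rot.injective h)
  -- the deletion permutation on darts of G
  let bigρ : Equiv.Perm G.Dart :=
    Equiv.swap d₁ (R.rot d₁) * (Equiv.swap d₀ (R.rot d₀) * R.rot)
  have bρ_apply : ∀ e, bigρ e
      = Equiv.swap d₁ (R.rot d₁) (Equiv.swap d₀ (R.rot d₀) (R.rot e)) := fun e => rfl
  have bρ_d₀ : bigρ d₀ = d₀ := by
    rw [bρ_apply, Equiv.swap_apply_right,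
      Equiv.swap_apply_of_ne_of_ne hne01 (Ne.symm hrot1_ne0)]
  have bρ_d₁ : bigρ d₁ = d₁ := by
    rw [bρ_apply, Equiv.swap_apply_of_ne_of_ne hrot1_ne0 (Ne.symm hrot_inj_ne),
      Equiv.swap_apply_right]
  have bρ_eval : ∀ e : G.Dart, e ≠ d₀ → e ≠ d₁ →
      bigρ e = if R.rot e = d₀ then R.rot d₀ else if R.rot e = d₁ then R.rot d₁
        else R.rot e := by
    intro e he0 he1
    by_cases hA : R.rot e = d₀
    · rw [if_pos hA, bρ_apply, hA, Equiv.swap_apply_left,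
        Equiv.swap_apply_of_ne_of_ne hrot0_ne1 hrot_inj_ne]
    · by_cases hB : R.rot e = d₁
      · rw [if_neg hA, if_pos hB, bρ_apply, hB,
          Equiv.swap_apply_of_ne_of_ne (Ne.symm hne01) (Ne.symm hrot0_ne1),
          Equiv.swap_apply_left]
      · rw [if_neg hA, if_neg hB, bρ_apply,
          Equiv.swap_apply_of_ne_of_ne hA (fun h => he0 (R.rot.injective h)),
          Equiv.swap_apply_of_ne_of_ne hB (fun h => he1 (R.rot.injective h))]
  have hcond : ∀ e, e ∈ Set.range (emb G v w) ↔ bigρ e ∈ Set.range (emb G v w) := by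
    intro e
    rw [mem_range_emb_iff hvw, mem_range_emb_iff hvw]
    constructor
    · rintro ⟨he0, he1⟩
      exact ⟨fun h => he0 (bigρ.injective (h.trans bρ_d₀.symm)),
        fun h => he1 (bigρ.injective (h.trans bρ_d₁.symm))⟩
    · rintro ⟨h0, h1⟩
      constructor
      · intro h; apply h0; rw [h]; exact bρ_d₀
      · intro h; apply h1; rw [h]; exact bρ_d₁
  let subE := Equiv.ofInjective (emb G v w) (emb_inj G v w)
  let rot' : Equiv.Perm (G.deleteEdges {s(v,w)}).Dart :=
    (subE.symm).permCongr (bigρ.subtypePerm (fun e => (hcond e).symm))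
  have key : ∀ d, emb G v w (rot' d) = bigρ (emb G v w d) := by
    intro d
    have h1 : rot' d = subE.symm ((bigρ.subtypePerm (fun e => (hcond e).symm)) (subE d)) := rfl
    rw [h1]
    have h2 : emb G v w (subE.symm ((bigρ.subtypePerm (fun e => (hcond e).symm)) (subE d)))
        = ((bigρ.subtypePerm (fun e => (hcond e).symm)) (subE d) : G.Dart) :=
      Equiv.apply_ofInjective_symm (emb_inj G v w) _
    rw [h2, Equiv.Perm.subtypePerm_apply]
    rfl
  have key_fst : ∀ d, (rot' d).fst = d.fst := by
    intro d
    have hf : (rot' d).fst = (bigρ (emb G v w d)).fst := congrArg (fun x => x.fst) (key d)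
    rw [bρ_eval (emb G v w d) (emb_ne_dart0 hvw d) (emb_ne_dart1 hvw d)] at hf
    by_cases hA : R.rot (emb G v w d) = d₀
    · rw [if_pos hA] at hf
      rw [hf, R.fst_rot]
      have h2 := R.fst_rot (emb G v w d)
      rw [hA] at h2
      exact h2
    · by_cases hB : R.rot (emb G v w d) = d₁
      · rw [if_neg hA, if_pos hB] at hf
        rw [hf, R.fst_rot]
        have h2 := R.fst_rot (emb G v w d)
        rw [hB] at h2
        exact h2
      · rw [if_neg hA, if_neg hB] at hf
        rw [hf, R.fst_rot]
        rfl
  have hdesc : ∀ n : ℕ, ∀ d e : (G.deleteEdges {s(v,w)}).Dart,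
      (R.rot ^ n) (emb G v w d) = emb G v w e → ∃ m : ℕ, (rot' ^ m) d = e := by
    intro n
    induction n using Nat.strong_induction_on with
    | _ n IH =>
    intro d e hde
    rcases Nat.eq_zero_or_pos n with rfl | hn
    · rw [pow_zero] at hde
      exact ⟨0, emb_inj G v w hde⟩
    rcases decomp hvw (R.rot (emb G v w d)) with ⟨d₂, hd₂⟩ | hA | hB
    · have hstep : emb G v w (rot' d) = R.rot (emb G v w d) := by
        rw [key d, bρ_eval _ (emb_ne_dart0 hvw d) (emb_ne_dart1 hvw d),
          if_neg (by rw [← hd₂]; exact emb_ne_dart0 hvw d₂),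
          if_neg (by rw [← hd₂]; exact emb_ne_dart1 hvw d₂)]
      have hrw : (R.rot ^ (n-1)) (emb G v w (rot' d)) = emb G v w e := by
        rw [hstep]
        have h3 : (R.rot ^ n) (emb G v w d) = (R.rot ^ (n-1)) (R.rot (emb G v w d)) := by
          conv_lhs => rw [show n = (n-1)+1 by omega]
          rw [pow_succ, Equiv.Perm.mul_apply]
        rw [← h3, hde]
      obtain ⟨m, hm⟩ := IH (n-1) (by omega) (rot' d) e hrw
      exact ⟨m+1, by rw [pow_succ, Equiv.Perm.mul_apply, hm]⟩
    · rcases Nat.lt_or_ge n 2 with h2 | h2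
      · exfalso
        have hn1 : n = 1 := by omega
        rw [hn1, pow_one] at hde
        exact emb_ne_dart0 hvw e (hde.symm.trans hA)
      · have hstep : emb G v w (rot' d) = R.rot d₀ := by
          rw [key d, bρ_eval _ (emb_ne_dart0 hvw d) (emb_ne_dart1 hvw d), if_pos hA]
        have hrw : (R.rot ^ (n-2)) (emb G v w (rot' d)) = emb G v w e := by
          rw [hstep]
          have h3 : (R.rot ^ n) (emb G v w d)
              = (R.rot ^ (n-2)) (R.rot (R.rot (emb G v w d))) := by
            conv_lhs => rw [show n = (n-2)+2 by omega]
            rw [pow_add, Equiv.Perm.mul_apply, pow_two, Equiv.Perm.mul_apply]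
          rw [hA] at h3
          rw [← h3, hde]
        obtain ⟨m, hm⟩ := IH (n-2) (by omega) (rot' d) e hrw
        exact ⟨m+1, by rw [pow_succ, Equiv.Perm.mul_apply, hm]⟩
    · rcases Nat.lt_or_ge n 2 with h2 | h2
      · exfalso
        have hn1 : n = 1 := by omega
        rw [hn1, pow_one] at hde
        exact emb_ne_dart1 hvw e (hde.symm.trans hB)
      · have hstep : emb G v w (rot' d) = R.rot d₁ := by
          rw [key d, bρ_eval _ (emb_ne_dart0 hvw d) (emb_ne_dart1 hvw d),
            if_neg (by rw [hB]; exact Ne.symm hne01), if_pos hB]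
        have hrw : (R.rot ^ (n-2)) (emb G v w (rot' d)) = emb G v w e := by
          rw [hstep]
          have h3 : (R.rot ^ n) (emb G v w d)
              = (R.rot ^ (n-2)) (R.rot (R.rot (emb G v w d))) := by
            conv_lhs => rw [show n = (n-2)+2 by omega]
            rw [pow_add, Equiv.Perm.mul_apply, pow_two, Equiv.Perm.mul_apply]
          rw [hB] at h3
          rw [← h3, hde]
        obtain ⟨m, hm⟩ := IH (n-2) (by omega) (rot' d) e hrw
        exact ⟨m+1, by rw [pow_succ, Equiv.Perm.mul_apply, hm]⟩
  let R' : RotSys (G.deleteEdges {s(v,w)}) :=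
    { rot := rot'
      fst_rot := key_fst
      orbit_full := by
        intro d d' hfst
        obtain ⟨n, hn⟩ := R.orbit_full (emb G v w d) (emb G v w d')
          (by rw [emb_fst, emb_fst, hfst])
        exact hdesc n d d' hn }
  -- vertex count
  have hV : R'.numVerts = R.numVerts := by
    rw [numVerts_eq R', numVerts_eq R, range_fst_eq hvw hvu hwu]
  -- edge count
  have hE : Nat.card G.edgeSet = Nat.card (G.deleteEdges {s(v,w)}).edgeSet + 1 :=
    edge_count hvw
  -- components
  have hrotmem : rot' ∈ Subgroup.closure
      ({rot', dartRev (G.deleteEdges {s(v,w)})} : Set (Equiv.Perm _)) :=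
    Subgroup.subset_closure (Set.mem_insert _ _)
  have hrevmem : dartRev (G.deleteEdges {s(v,w)}) ∈ Subgroup.closure
      ({rot', dartRev (G.deleteEdges {s(v,w)})} : Set (Equiv.Perm _)) :=
    Subgroup.subset_closure (Set.mem_insert_of_mem _ rfl)
  have mkrot : ∀ (x : (G.deleteEdges {s(v,w)}).Dart) (n : ℕ),
      (Quotient.mk'' x : MulAction.orbitRel.Quotient
        (Subgroup.closure ({rot', dartRev (G.deleteEdges {s(v,w)})} : Set (Equiv.Perm _)))
        (G.deleteEdges {s(v,w)}).Dart) = Quotient.mk'' ((rot' ^ n) x) :=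
    fun x n => cmk_eq _ _ _ (pow_mem hrotmem n) x
  have mkrev : ∀ (x : (G.deleteEdges {s(v,w)}).Dart),
      (Quotient.mk'' x : MulAction.orbitRel.Quotient
        (Subgroup.closure ({rot', dartRev (G.deleteEdges {s(v,w)})} : Set (Equiv.Perm _)))
        (G.deleteEdges {s(v,w)}).Dart) = Quotient.mk'' x.symm :=
    fun x => cmk_eq _ _ _ hrevmem x
  have hconn : (Quotient.mk'' av : MulAction.orbitRel.Quotient
      (Subgroup.closure ({rot', dartRev (G.deleteEdges {s(v,w)})} : Set (Equiv.Perm _)))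
      (G.deleteEdges {s(v,w)}).Dart) = Quotient.mk'' aw := by
    have h1 : av.symm = e₁ := SimpleGraph.Dart.ext _ _ rfl
    have h2 : e₂.symm = aw := SimpleGraph.Dart.ext _ _ rfl
    obtain ⟨n, hn⟩ := R'.orbit_full e₁ e₂ rfl
    calc (Quotient.mk'' av : MulAction.orbitRel.Quotient _ _)
        = Quotient.mk'' av.symm := mkrev av
      _ = Quotient.mk'' e₁ := by rw [h1]
      _ = Quotient.mk'' ((rot' ^ n) e₁) := mkrot e₁ n
      _ = Quotient.mk'' e₂ := by
          rw [show (rot' ^ n) e₁ = (R'.rot ^ n) e₁ from rfl, hn]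
      _ = Quotient.mk'' e₂.symm := mkrev e₂
      _ = Quotient.mk'' aw := by rw [h2]
  let π : G.Dart → (G.deleteEdges {s(v,w)}).Dart := fun e =>
    if he : e = d₀ then av else if he1 : e = d₁ then aw
    else subE.symm ⟨e, (mem_range_emb_iff hvw e).2 ⟨he, he1⟩⟩
  have π_emb : ∀ d, π (emb G v w d) = d := by
    intro d
    simp only [π, dif_neg (emb_ne_dart0 hvw d), dif_neg (emb_ne_dart1 hvw d)]
    rw [dif_neg (emb_ne_dart0 hvw d), dif_neg (emb_ne_dart1 hvw d)]
    apply emb_inj G v w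
    exact Equiv.apply_ofInjective_symm (emb_inj G v w) _
  have π_d₀ : π d₀ = av := by simp only [π, dif_pos rfl]
  have π_d₁ : π d₁ = aw := by
    simp only [π, dif_neg (Ne.symm hne01)]
    simp
  have hC : R'.numComps ≤ R.numComps := by
    refine compCount_le rot' (dartRev (G.deleteEdges {s(v,w)})) R.rot (dartRev G) π ?_ ?_ ?_
    · -- rotation step
      intro e
      rcases decomp hvw e with ⟨d, rfl⟩ | he0 | he1
      · rw [π_emb d]
        rcases decomp hvw (R.rot (emb G v w d)) with ⟨d₂, hd₂⟩ | hA | hB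
        · have hstep : emb G v w (rot' d) = R.rot (emb G v w d) := by
            rw [key d, bρ_eval _ (emb_ne_dart0 hvw d) (emb_ne_dart1 hvw d),
              if_neg (by rw [← hd₂]; exact emb_ne_dart0 hvw d₂),
              if_neg (by rw [← hd₂]; exact emb_ne_dart1 hvw d₂)]
          have hd2' : rot' d = d₂ := emb_inj G v w (hstep.trans hd₂.symm)
          rw [← hd₂, π_emb d₂, ← hd2']
          exact mkrot d 1 |>.trans (by rw [pow_one])
        · rw [hA, π_d₀]
          have hfst : d.fst = av.fst := by
            have h2 := R.fst_rot (emb G v w d)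
            rw [hA] at h2
            exact h2.symm
          obtain ⟨n, hn⟩ := R'.orbit_full d av hfst
          exact (mkrot d n).trans (by rw [show (rot' ^ n) d = (R'.rot ^ n) d from rfl, hn])
        · rw [hB, π_d₁]
          have hfst : d.fst = aw.fst := by
            have h2 := R.fst_rot (emb G v w d)
            rw [hB] at h2
            exact h2.symm
          obtain ⟨n, hn⟩ := R'.orbit_full d aw hfst
          exact (mkrot d n).trans (by rw [show (rot' ^ n) d = (R'.rot ^ n) d from rfl, hn])
      · subst he0
        rw [π_d₀]
        rcases decomp hvw (R.rot d₀) with ⟨d₂, hd₂⟩ | hA | hB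
        · rw [← hd₂, π_emb d₂]
          have hfst : av.fst = d₂.fst := by
            have h2 := R.fst_rot d₀
            rw [← hd₂] at h2
            exact h2.symm
          obtain ⟨n, hn⟩ := R'.orbit_full av d₂ hfst
          exact (mkrot av n).trans
            (by rw [show (rot' ^ n) av = (R'.rot ^ n) av from rfl, hn])
        · exact absurd hA hrot0_ne0
        · exact absurd hB hrot0_ne1
      · subst he1
        rw [π_d₁]
        rcases decomp hvw (R.rot d₁) with ⟨d₂, hd₂⟩ | hA | hB
        · rw [← hd₂, π_emb d₂]
          have hfst : aw.fst = d₂.fst := by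
            have h2 := R.fst_rot d₁
            rw [← hd₂] at h2
            exact h2.symm
          obtain ⟨n, hn⟩ := R'.orbit_full aw d₂ hfst
          exact (mkrot aw n).trans
            (by rw [show (rot' ^ n) aw = (R'.rot ^ n) aw from rfl, hn])
        · exact absurd hA hrot1_ne0
        · exact absurd hB hrot1_ne1
    · -- reversal step
      intro e
      have hrev : dartRev G e = e.symm := rfl
      rw [hrev]
      rcases decomp hvw e with ⟨d, rfl⟩ | he0 | he1
      · rw [π_emb d, ← emb_symm, π_emb d.symm]
        exact mkrev d
      · subst he0
        rw [π_d₀, dart0_symm hvw, π_d₁]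
        exact hconn
      · subst he1
        rw [π_d₁, dart1_symm hvw, π_d₀]
        exact hconn.symm
    · intro b
      exact ⟨emb G v w b, by rw [π_emb b]⟩
  -- faces
  let hp : Equiv.Perm G.Dart := R.facePerm * Equiv.swap d₀ d₁
  have hbase : ∀ d : (G.deleteEdges {s(v,w)}).Dart,
      hp (emb G v w d) = R.rot (emb G v w d.symm) := by
    intro d
    have h1 : hp (emb G v w d) = R.facePerm (Equiv.swap d₀ d₁ (emb G v w d)) := rfl
    rw [h1, Equiv.swap_apply_of_ne_of_ne (emb_ne_dart0 hvw d) (emb_ne_dart1 hvw d),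
      facePerm_apply, ← emb_symm]
  have hface' : ∀ d, emb G v w (R'.facePerm d) = bigρ (emb G v w d.symm) := by
    intro d
    have h1 : R'.facePerm d = rot' d.symm := rfl
    rw [h1, key]
  have hp_d₀ : hp d₀ = R.rot d₀ := by
    have h1 : hp d₀ = R.facePerm (Equiv.swap d₀ d₁ d₀) := rfl
    rw [h1, Equiv.swap_apply_left, facePerm_apply, dart1_symm hvw]
  have hp_d₁ : hp d₁ = R.rot d₁ := by
    have h1 : hp d₁ = R.facePerm (Equiv.swap d₀ d₁ d₁) := rfl
    rw [h1, Equiv.swap_apply_right, facePerm_apply, dart0_symm hvw]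
  have hfaces_eq : orbCount R'.facePerm = orbCount hp := by
    refine orbCount_skip (emb G v w) (emb_inj G v w) d₀ d₁ (range_emb hvw)
      R'.facePerm hp ?_ ?_ ?_
    · intro d
      rcases decomp hvw (R.rot (emb G v w d.symm)) with ⟨c, hc⟩ | hA | hB
      · left
        rw [hbase d, hface' d, bρ_eval _ (emb_ne_dart0 hvw d.symm) (emb_ne_dart1 hvw d.symm),
          if_neg (by rw [← hc]; exact emb_ne_dart0 hvw c),
          if_neg (by rw [← hc]; exact emb_ne_dart1 hvw c)]
      · right
        constructor
        · left; rw [hbase d, hA]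
        · rw [hbase d, hA, hp_d₀, hface' d,
            bρ_eval _ (emb_ne_dart0 hvw d.symm) (emb_ne_dart1 hvw d.symm), if_pos hA]
      · right
        constructor
        · right; rw [hbase d, hB]
        · rw [hbase d, hB, hp_d₁, hface' d,
            bρ_eval _ (emb_ne_dart0 hvw d.symm) (emb_ne_dart1 hvw d.symm),
            if_neg (by rw [hB]; exact Ne.symm hne01), if_pos hB]
    · rw [hp_d₀]
      exact (mem_range_emb_iff hvw _).2 ⟨hrot0_ne0, hrot0_ne1⟩
    · rw [hp_d₁]
      exact (mem_range_emb_iff hvw _).2 ⟨hrot1_ne0, hrot1_ne1⟩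
  have hF : R.numFaces ≤ R'.numFaces + 1 := by
    have hA' : orbCount R.facePerm ≤ orbCount (R.facePerm * Equiv.swap d₀ d₁) + 1 :=
      orbCount_le _ d₀ d₁
    have h1 : R.numFaces = orbCount R.facePerm := rfl
    have h2 : R'.numFaces = orbCount R'.facePerm := rfl
    rw [h1, h2, hfaces_eq]
    exact hA'
  refine ⟨R', ?_⟩
  show 2 * R'.numComps + Nat.card (G.deleteEdges {s(v,w)}).edgeSet
    ≤ 2 * k + R'.numFaces + R'.numVerts
  have hR' : 2 * R.numComps + Nat.card G.edgeSet ≤ 2 * k + R.numFaces + R.numVerts := hR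
  omega

end Delete
end AltAux

namespace AltAux
open AltPaper SimpleGraph
set_option linter.unusedSectionVars false
set_option linter.unusedVariables false
set_option maxHeartbeats 1000000

section Insert

variable {V : Type*} [Fintype V] {G : SimpleGraph V} {v w u : V}

lemma genusLE_insert_aux (hvw : G.Adj v w) (hvu : G.Adj v u) (hwu : G.Adj w u) (k : ℕ)
    (H : SimpleGraph V) (hH : H = G.deleteEdges {s(v,w)})
    (R' : RotSys H) (hgen : R'.genusLE k)
    (hrot : ∀ e : H.Dart, e.toProd = (u,v) → (R'.rot e).toProd = (u,w)) :
    GenusLE G k := by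
  subst hH
  classical
  letI : DecidableEq G.Dart := Classical.decEq _
  haveI : Finite G.Dart := Finite.of_injective _ SimpleGraph.Dart.toProd_injective
  haveI : Finite (G.deleteEdges {s(v,w)}).Dart :=
    Finite.of_injective _ SimpleGraph.Dart.toProd_injective
  have huv : u ≠ v := fun h => hvu.ne h.symm
  have huw : u ≠ w := fun h => hwu.ne h.symm
  set d₀ := dart0 hvw with hd₀def
  set d₁ := dart1 hvw with hd₁def
  have hne01 : d₀ ≠ d₁ := dart0_ne_dart1 hvw
  let av : (G.deleteEdges {s(v,w)}).Dart :=
    ⟨(v,u), adj_del hvw hvu (fun hh => huw hh.2) (fun hh => hvw.ne hh.1)⟩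
  let aw : (G.deleteEdges {s(v,w)}).Dart :=
    ⟨(w,u), adj_del hvw hwu (fun hh => hvw.ne hh.1.symm) (fun hh => huv hh.2)⟩
  let e₁ : (G.deleteEdges {s(v,w)}).Dart :=
    ⟨(u,v), adj_del hvw (hvu.symm) (fun hh => huv hh.1) (fun hh => huw hh.1)⟩
  let e₂ : (G.deleteEdges {s(v,w)}).Dart :=
    ⟨(u,w), adj_del hvw (hwu.symm) (fun hh => huv hh.1) (fun hh => huw hh.1)⟩
  have hrot' : R'.rot e₁ = e₂ := SimpleGraph.Dart.ext _ _ (hrot e₁ rfl)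
  set x₀ := R'.rot.symm av with hx₀def
  have hx₀ : R'.rot x₀ = av := Equiv.apply_symm_apply _ _
  have x₀fst : x₀.fst = v := by
    have h1 := R'.fst_rot x₀
    rw [hx₀] at h1
    exact h1.symm
  have hx₀y₀ : x₀ ≠ aw := by
    intro h
    have : x₀.fst = w := by rw [h]
    rw [x₀fst] at this
    exact hvw.ne this
  have he₁x₀ : e₁ ≠ x₀ := by
    intro h
    have : e₁.fst = v := by rw [h, x₀fst]
    exact huv this
  have he₁y₀ : e₁ ≠ aw := by
    intro h
    have h2 := congrArg (fun d : (G.deleteEdges {s(v,w)}).Dart => d.toProd.1) h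
    exact huw h2
  -- extension of R'.rot to G.Dart fixing d₀, d₁
  let subE := Equiv.ofInjective (emb G v w) (emb_inj G v w)
  let ρ : Equiv.Perm G.Dart := R'.rot.extendDomain subE
  have ρ_emb : ∀ d, ρ (emb G v w d) = emb G v w (R'.rot d) := by
    intro d
    exact Equiv.Perm.extendDomain_apply_image R'.rot subE d
  have ρ_d₀ : ρ d₀ = d₀ :=
    Equiv.Perm.extendDomain_apply_not_subtype _ _
      (fun hmem => ((mem_range_emb_iff hvw d₀).1 hmem).1 rfl)
  have ρ_d₁ : ρ d₁ = d₁ :=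
    Equiv.Perm.extendDomain_apply_not_subtype _ _
      (fun hmem => ((mem_range_emb_iff hvw d₁).1 hmem).2 rfl)
  -- distinctness facts
  have hιx₀0 : emb G v w x₀ ≠ d₀ := emb_ne_dart0 hvw x₀
  have hιx₀1 : emb G v w x₀ ≠ d₁ := emb_ne_dart1 hvw x₀
  have hιy₀0 : emb G v w aw ≠ d₀ := emb_ne_dart0 hvw aw
  have hιy₀1 : emb G v w aw ≠ d₁ := emb_ne_dart1 hvw aw
  have hιx₀y₀ : emb G v w x₀ ≠ emb G v w aw := fun h => hx₀y₀ (emb_inj G v w h)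
  let newRot : Equiv.Perm G.Dart :=
    ρ * (Equiv.swap (emb G v w x₀) d₀ * Equiv.swap (emb G v w aw) d₁)
  have nr_apply : ∀ e, newRot e
      = ρ (Equiv.swap (emb G v w x₀) d₀ (Equiv.swap (emb G v w aw) d₁ e)) := fun e => rfl
  have nr_ιx₀ : newRot (emb G v w x₀) = d₀ := by
    rw [nr_apply, Equiv.swap_apply_of_ne_of_ne hιx₀y₀ hιx₀1, Equiv.swap_apply_left, ρ_d₀]
  have nr_d₀ : newRot d₀ = emb G v w av := by
    rw [nr_apply, Equiv.swap_apply_of_ne_of_ne (Ne.symm hιy₀0) hne01,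
      Equiv.swap_apply_right, ρ_emb, hx₀]
  have nr_ιy₀ : newRot (emb G v w aw) = d₁ := by
    rw [nr_apply, Equiv.swap_apply_left,
      Equiv.swap_apply_of_ne_of_ne (Ne.symm hιx₀1) (Ne.symm hne01), ρ_d₁]
  have nr_d₁ : newRot d₁ = emb G v w (R'.rot aw) := by
    rw [nr_apply, Equiv.swap_apply_right,
      Equiv.swap_apply_of_ne_of_ne (Ne.symm hιx₀y₀) hιy₀0, ρ_emb]
  have nr_other : ∀ d, d ≠ x₀ → d ≠ aw → newRot (emb G v w d) = emb G v w (R'.rot d) := by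
    intro d h1 h2
    rw [nr_apply,
      Equiv.swap_apply_of_ne_of_ne (fun h => h2 (emb_inj G v w h)) (emb_ne_dart1 hvw d),
      Equiv.swap_apply_of_ne_of_ne (fun h => h1 (emb_inj G v w h)) (emb_ne_dart0 hvw d),
      ρ_emb]
  -- the rotation system on G
  have fst_newRot : ∀ e : G.Dart, (newRot e).fst = e.fst := by
    intro e
    rcases decomp hvw e with ⟨d, rfl⟩ | h0 | h1
    · by_cases hdx : d = x₀
      · subst hdx
        rw [nr_ιx₀]
        show v = _
        rw [emb_fst, x₀fst]
      · by_cases hdy : d = aw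
        · subst hdy
          rw [nr_ιy₀]
          rfl
        · rw [nr_other d hdx hdy, emb_fst, emb_fst, R'.fst_rot]
    · subst h0
      rw [nr_d₀]
      rfl
    · subst h1
      rw [nr_d₁, emb_fst, R'.fst_rot]
      rfl
  have reach : ∀ (n : ℕ) (d : (G.deleteEdges {s(v,w)}).Dart),
      ∃ m : ℕ, (newRot ^ m) (emb G v w d) = emb G v w ((R'.rot ^ n) d) := by
    intro n d
    induction n with
    | zero => exact ⟨0, by simp⟩
    | succ n ih =>
        obtain ⟨m, hm⟩ := ih
        have hpow : ((R'.rot ^ (n+1)) d) = R'.rot ((R'.rot ^ n) d) :=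
          pow_succ_apply _ _ _
        by_cases hx : (R'.rot ^ n) d = x₀
        · refine ⟨m + 2, ?_⟩
          rw [show m + 2 = (m+1)+1 from rfl, pow_succ_apply, pow_succ_apply,
            hm, hx, nr_ιx₀, nr_d₀, hpow, hx, hx₀]
        · by_cases hy : (R'.rot ^ n) d = aw
          · refine ⟨m + 2, ?_⟩
            rw [show m + 2 = (m+1)+1 from rfl, pow_succ_apply, pow_succ_apply,
              hm, hy, nr_ιy₀, nr_d₁, hpow, hy]
          · refine ⟨m + 1, ?_⟩
            rw [pow_succ_apply, hm, nr_other _ hx hy, hpow]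
  let R : RotSys G :=
    { rot := newRot
      fst_rot := fst_newRot
      orbit_full := by
        intro a b hfst
        rcases decomp hvw a with ⟨d, rfl⟩ | h0 | h1
        · rcases decomp hvw b with ⟨d', rfl⟩ | k0 | k1
          · obtain ⟨n, hn⟩ := R'.orbit_full d d' hfst
            obtain ⟨m, hm⟩ := reach n d
            exact ⟨m, by rw [hm, hn]⟩
          · subst k0
            obtain ⟨n, hn⟩ := R'.orbit_full d x₀ (hfst.trans x₀fst.symm)
            obtain ⟨m, hm⟩ := reach n d
            refine ⟨m + 1, ?_⟩
            rw [pow_succ_apply, hm, hn, nr_ιx₀]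
          · subst k1
            obtain ⟨n, hn⟩ := R'.orbit_full d aw hfst
            obtain ⟨m, hm⟩ := reach n d
            refine ⟨m + 1, ?_⟩
            rw [pow_succ_apply, hm, hn, nr_ιy₀]
        · subst h0
          rcases decomp hvw b with ⟨d', rfl⟩ | k0 | k1
          · obtain ⟨n, hn⟩ := R'.orbit_full av d' hfst
            obtain ⟨m, hm⟩ := reach n av
            refine ⟨m + 1, ?_⟩
            rw [pow_succ_apply', nr_d₀, hm, hn]
          · exact ⟨0, by rw [pow_zero]; exact Equiv.refl_apply _ ▸ k0.symm ▸ rfl⟩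
          · subst k1
            exact absurd hfst hvw.ne
        · subst h1
          rcases decomp hvw b with ⟨d', rfl⟩ | k0 | k1
          · obtain ⟨n, hn⟩ := R'.orbit_full (R'.rot aw) d'
              (by rw [R'.fst_rot]; exact hfst)
            obtain ⟨m, hm⟩ := reach n (R'.rot aw)
            refine ⟨m + 1, ?_⟩
            rw [pow_succ_apply', nr_d₁, hm, hn]
          · subst k0
            exact absurd hfst (fun h => hvw.ne h.symm)
          · exact ⟨0, by rw [pow_zero]; exact Equiv.refl_apply _ ▸ k1.symm ▸ rfl⟩ }
  -- vertex count
  have hV : R.numVerts = R'.numVerts := by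
    rw [numVerts_eq R, numVerts_eq R', range_fst_eq hvw hvu hwu]
  -- edge count
  have hE : Nat.card G.edgeSet = Nat.card (G.deleteEdges {s(v,w)}).edgeSet + 1 :=
    edge_count hvw
  -- components
  have hrotmem : newRot ∈ Subgroup.closure ({newRot, dartRev G} : Set (Equiv.Perm G.Dart)) :=
    Subgroup.subset_closure (Set.mem_insert _ _)
  have hrevmem : dartRev G ∈ Subgroup.closure ({newRot, dartRev G} : Set (Equiv.Perm G.Dart)) :=
    Subgroup.subset_closure (Set.mem_insert_of_mem _ rfl)
  have mkrot : ∀ (x : G.Dart) (n : ℕ),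
      (Quotient.mk'' x : MulAction.orbitRel.Quotient
        (Subgroup.closure ({newRot, dartRev G} : Set (Equiv.Perm G.Dart))) G.Dart)
        = Quotient.mk'' ((newRot ^ n) x) :=
    fun x n => cmk_eq _ _ _ (pow_mem hrotmem n) x
  have mkrev : ∀ (x : G.Dart),
      (Quotient.mk'' x : MulAction.orbitRel.Quotient
        (Subgroup.closure ({newRot, dartRev G} : Set (Equiv.Perm G.Dart))) G.Dart)
        = Quotient.mk'' x.symm :=
    fun x => cmk_eq _ _ _ hrevmem x
  have hC : R.numComps ≤ R'.numComps := by
    refine compCount_le newRot (dartRev G) R'.rot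
      (dartRev (G.deleteEdges {s(v,w)})) (emb G v w) ?_ ?_ ?_
    · intro b
      by_cases hx : b = x₀
      · subst hx
        have h2 : (newRot ^ 2) (emb G v w x₀) = emb G v w (R'.rot x₀) := by
          rw [pow_two, Equiv.Perm.mul_apply, nr_ιx₀, nr_d₀, hx₀]
        rw [← h2]
        exact mkrot _ 2
      · by_cases hy : b = aw
        · subst hy
          have h2 : (newRot ^ 2) (emb G v w aw) = emb G v w (R'.rot aw) := by
            rw [pow_two, Equiv.Perm.mul_apply, nr_ιy₀, nr_d₁]
          rw [← h2]
          exact mkrot _ 2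
        · rw [← nr_other b hx hy]
          exact (mkrot _ 1).trans (by rw [pow_one])
    · intro b
      have h1 : emb G v w (dartRev (G.deleteEdges {s(v,w)}) b) = (emb G v w b).symm :=
        emb_symm G v w b
      rw [h1]
      exact mkrev _
    · intro e
      rcases decomp hvw e with ⟨d, rfl⟩ | h0 | h1
      · exact ⟨d, rfl⟩
      · subst h0
        refine ⟨av, ?_⟩
        rw [← nr_d₀]
        exact (mkrot _ 1).trans (by rw [pow_one])
      · subst h1
        refine ⟨R'.rot aw, ?_⟩
        rw [← nr_d₁]
        exact (mkrot _ 1).trans (by rw [pow_one])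
  -- faces
  let hp : Equiv.Perm G.Dart := R.facePerm * Equiv.swap d₀ d₁
  have hpface : ∀ e, R.facePerm e = newRot e.symm := fun e => rfl
  have hbase : ∀ d : (G.deleteEdges {s(v,w)}).Dart,
      hp (emb G v w d) = newRot (emb G v w d.symm) := by
    intro d
    have h1 : hp (emb G v w d) = R.facePerm (Equiv.swap d₀ d₁ (emb G v w d)) := rfl
    rw [h1, Equiv.swap_apply_of_ne_of_ne (emb_ne_dart0 hvw d) (emb_ne_dart1 hvw d),
      hpface, ← emb_symm]
  have hp_d₀ : hp d₀ = emb G v w av := by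
    have h1 : hp d₀ = R.facePerm (Equiv.swap d₀ d₁ d₀) := rfl
    rw [h1, Equiv.swap_apply_left, hpface, dart1_symm hvw, nr_d₀]
  have hp_d₁ : hp d₁ = emb G v w (R'.rot aw) := by
    have h1 : hp d₁ = R.facePerm (Equiv.swap d₀ d₁ d₁) := rfl
    rw [h1, Equiv.swap_apply_right, hpface, dart0_symm hvw, nr_d₁]
  have hface'_apply : ∀ d, R'.facePerm d = R'.rot d.symm := fun d => rfl
  have hfaces_eq : orbCount R'.facePerm = orbCount hp := by
    refine orbCount_skip (emb G v w) (emb_inj G v w) d₀ d₁ (range_emb hvw)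
      R'.facePerm hp ?_ ?_ ?_
    · intro d
      by_cases hx : d.symm = x₀
      · right
        constructor
        · left
          rw [hbase d, hx, nr_ιx₀]
        · rw [hbase d, hx, nr_ιx₀, hp_d₀, hface'_apply, hx, hx₀]
      · by_cases hy : d.symm = aw
        · right
          constructor
          · right
            rw [hbase d, hy, nr_ιy₀]
          · rw [hbase d, hy, nr_ιy₀, hp_d₁, hface'_apply, hy]
        · left
          rw [hbase d, nr_other _ hx hy, hface'_apply]
    · rw [hp_d₀]
      exact ⟨av, rfl⟩
    · rw [hp_d₁]
      exact ⟨R'.rot aw, rfl⟩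
  have hsc : hp.SameCycle d₀ d₁ := by
    refine (sameCycle_iff_natpow hp d₀ d₁).2 ⟨3, ?_⟩
    have h1 : hp d₀ = emb G v w av := hp_d₀
    have h2 : hp (emb G v w av) = emb G v w e₂ := by
      have hs : av.symm = e₁ := SimpleGraph.Dart.ext _ _ rfl
      rw [hbase av, hs, nr_other e₁ he₁x₀ he₁y₀, hrot']
    have h3 : hp (emb G v w e₂) = d₁ := by
      have hs : e₂.symm = aw := SimpleGraph.Dart.ext _ _ rfl
      rw [hbase e₂, hs, nr_ιy₀]
    have h4 : (hp ^ 3) d₀ = hp (hp (hp d₀)) := by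
      rw [show (3:ℕ) = 2+1 from rfl, pow_succ_apply, show (2:ℕ) = 1+1 from rfl,
        pow_succ_apply, pow_one]
    rw [h4, h1, h2, h3]
  have hF : R'.numFaces + 1 ≤ R.numFaces := by
    have h4 : R.facePerm = hp * Equiv.swap d₀ d₁ := by
      rw [show hp = R.facePerm * Equiv.swap d₀ d₁ from rfl, mul_assoc,
        Equiv.swap_mul_self, mul_one]
    have h5 := orbCount_add_one_le hp d₀ d₁ hne01 hsc
    have h6 : R'.numFaces = orbCount R'.facePerm := rfl
    have h7 : R.numFaces = orbCount R.facePerm := rfl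
    rw [h6, h7, hfaces_eq, h4]
    exact h5
  refine ⟨R, ?_⟩
  show 2 * R.numComps + Nat.card G.edgeSet ≤ 2 * k + R.numFaces + R.numVerts
  have hgen' : 2 * R'.numComps + Nat.card (G.deleteEdges {s(v,w)}).edgeSet
      ≤ 2 * k + R'.numFaces + R'.numVerts := hgen
  omega

end Insert
end AltAux

namespace AltAux
open AltPaper SimpleGraph
set_option linter.unusedSectionVars false
set_option linter.unusedVariables false
set_option maxHeartbeats 1000000

section Outer

variable {V : Type*} [Fintype V] {G : SimpleGraph V} {v w u : V}

lemma genusLE_insert [DecidableRel G.Adj] (huv : G.Adj u v) (hvw : G.Adj v w)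
    (huw : G.Adj u w) (hdeg : G.degree u = 3) (k : ℕ)
    (hgen : GenusLE (G.deleteEdges {s(v,w)}) k) : GenusLE G k := by
  classical
  obtain ⟨R', hR'⟩ := hgen
  haveI : Finite (G.deleteEdges {s(v,w)}).Dart :=
    Finite.of_injective _ SimpleGraph.Dart.toProd_injective
  have huv' : u ≠ v := huv.ne
  have huw' : u ≠ w := huw.ne
  let e₁ : (G.deleteEdges {s(v,w)}).Dart :=
    ⟨(u,v), adj_del hvw huv (fun hh => huv' hh.1) (fun hh => huw' hh.1)⟩
  let e₂ : (G.deleteEdges {s(v,w)}).Dart :=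
    ⟨(u,w), adj_del hvw huw (fun hh => huv' hh.1) (fun hh => huw' hh.1)⟩
  have he12 : e₁ ≠ e₂ := by
    intro h
    have h2 := congrArg (fun d : (G.deleteEdges {s(v,w)}).Dart => d.toProd.2) h
    exact hvw.ne h2
  have hdisj : R'.rot e₁ = e₂ ∨ R'.rot e₂ = e₁ := by
    by_contra hcon
    push_neg at hcon
    obtain ⟨hA, hB⟩ := hcon
    have hr1 : R'.rot e₁ ≠ e₁ := by
      intro h
      obtain ⟨n, hn⟩ := R'.orbit_full e₁ e₂ rfl
      rw [pow_apply_fix _ _ h n] at hn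
      exact he12 hn
    have hr2 : R'.rot e₂ ≠ e₂ := by
      intro h
      obtain ⟨n, hn⟩ := R'.orbit_full e₂ e₁ rfl
      rw [pow_apply_fix _ _ h n] at hn
      exact he12 hn.symm
    have hr12 : R'.rot e₁ ≠ R'.rot e₂ := fun h => he12 (R'.rot.injective h)
    set S : Set ((G.deleteEdges {s(v,w)}).Dart) := {d | d.toProd.1 = u} with hSdef
    have hsub : ({e₁, e₂, R'.rot e₁, R'.rot e₂} : Set ((G.deleteEdges {s(v,w)}).Dart))
        ⊆ S := by
      rintro d (rfl | rfl | rfl | rfl)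
      · rfl
      · rfl
      · exact R'.fst_rot e₁
      · exact R'.fst_rot e₂
    have hS3 : S.ncard = 3 := by
      have hEq : Nat.card S = Nat.card ((G.deleteEdges {s(v,w)}).neighborSet u) := by
        refine Nat.card_eq_of_bijective (fun p =>
          ⟨p.1.toProd.2, by
            have h2 := p.1.adj
            have h3 := p.2
            rw [show p.1.toProd.1 = u from h3] at h2
            exact h2⟩) ?_
        constructor
        · rintro ⟨a, ha⟩ ⟨b, hb⟩ hab
          have h2 : a.toProd.2 = b.toProd.2 := congrArg Subtype.val hab
          refine Subtype.ext (SimpleGraph.Dart.ext _ _ (Prod.ext ?_ h2))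
          rw [show a.toProd.1 = u from ha, show b.toProd.1 = u from hb]
        · rintro ⟨z, hz⟩
          exact ⟨⟨⟨(u, z), hz⟩, rfl⟩, rfl⟩
      have hNeq : (G.deleteEdges {s(v,w)}).neighborSet u = G.neighborSet u := by
        ext z
        simp only [SimpleGraph.mem_neighborSet, SimpleGraph.deleteEdges_adj]
        constructor
        · exact fun h => h.1
        · intro h
          refine ⟨h, ?_⟩
          simp only [Set.mem_singleton_iff, Sym2.eq_iff]
          rintro (⟨h1, h2⟩ | ⟨h1, h2⟩)
          · exact huv' h1
          · exact huw' h1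
      rw [← Nat.card_coe_set_eq, hEq, hNeq, Nat.card_eq_fintype_card,
        SimpleGraph.card_neighborSet_eq_degree, hdeg]
    have h4 : ({e₁, e₂, R'.rot e₁, R'.rot e₂} : Set ((G.deleteEdges {s(v,w)}).Dart)).ncard
        = 4 := by
      rw [Set.ncard_insert_of_notMem (by
          simp only [Set.mem_insert_iff, Set.mem_singleton_iff]
          push_neg
          exact ⟨he12, Ne.symm hr1, Ne.symm hB⟩) (Set.toFinite _),
        Set.ncard_insert_of_notMem (by
          simp only [Set.mem_insert_iff, Set.mem_singleton_iff]
          push_neg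
          exact ⟨Ne.symm hA, Ne.symm hr2⟩) (Set.toFinite _),
        Set.ncard_insert_of_notMem (by
          simp only [Set.mem_singleton_iff]
          exact hr12) (Set.toFinite _),
        Set.ncard_singleton]
    have hle := Set.ncard_le_ncard hsub (Set.toFinite _)
    omega
  rcases hdisj with hA | hB
  · refine genusLE_insert_aux hvw huv.symm huw.symm k _ rfl R' hR' ?_
    intro e he
    have h2 : e = e₁ := SimpleGraph.Dart.ext _ _ he
    rw [h2, hA]
  · refine genusLE_insert_aux (v := w) (w := v) hvw.symm huw.symm huv.symm k _
      (by rw [Sym2.eq_swap]) R' hR' ?_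
    intro e he
    have h2 : e = e₂ := SimpleGraph.Dart.ext _ _ he
    rw [h2, hB]

end Outer
end AltAux

open AltPaper in
/-- If `u, v, w` is a triangle of `G` and `u` has degree 3, then every
embedding of `G - vw` in a surface extends to an embedding of `G` in the same surface;
in particular `G` and `G - vw` have the same genus. -/
theorem statement_0 {V : Type*} [Fintype V] (G : SimpleGraph V) [DecidableRel G.Adj]
    (u v w : V) (huv : G.Adj u v) (hvw : G.Adj v w) (huw : G.Adj u w)
    (hdeg : G.degree u = 3) :
    (∀ k : ℕ, GenusLE (G.deleteEdges {s(v, w)}) k → GenusLE G k) ∧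
    (∀ k : ℕ, GenusLE G k ↔ GenusLE (G.deleteEdges {s(v, w)}) k) := by
  have h1 : ∀ k : ℕ, GenusLE (G.deleteEdges {s(v, w)}) k → GenusLE G k := fun k h =>
    AltAux.genusLE_insert huv hvw huw hdeg k h
  have h2 : ∀ k : ℕ, GenusLE G k → GenusLE (G.deleteEdges {s(v, w)}) k := fun k h =>
    AltAux.genusLE_delete hvw huv.symm huw.symm k h
  exact ⟨h1, fun k => ⟨h2 k, h1 k⟩⟩
end

section
/- Let H be a graph whose vertices are labelled with subsets of {X,Y}, such that at most four vertices of H carry both labels X and Y. Let Q be a cyclic sequence of the labelled vertices of H (each labelled vertex appearing exactly once). If the labels of Q cannot be arranged, in the cyclic order given by Q (choosing an order of the two labels at doubly-labelled vertices), into a cyclic label sequence with at most 4 label transitions, then Q contains six distinct vertices v1,...,v6 appearing in this cyclic order (or its reverse) such that X is a label of v1,v3,v5 and Y is a label of v2,v4,v6. -/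
open SimpleGraph

namespace AltPaper
theorem card_filter_comp (n : ℕ) (P : ZMod (n+1) → Prop) [DecidablePred P]
    (e : ℕ → ZMod (n+1))
    (hinj : ∀ j < n+1, ∀ k < n+1, e j = e k → j = k)
    (hsurj : ∀ i, ∃ j < n+1, e j = i) :
    ((Finset.range (n+1)).filter fun j => P (e j)).card = (Finset.univ.filter P).card := by
  apply Finset.card_bij (fun j _ => e j)
  · intro a ha
    exact Finset.mem_filter.mpr ⟨Finset.mem_univ _, (Finset.mem_filter.mp ha).2⟩
  · intro a ha b hb hab
    exact hinj a (Finset.mem_range.mp (Finset.mem_filter.mp ha).1) b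
      (Finset.mem_range.mp (Finset.mem_filter.mp hb).1) hab
  · intro i hi
    obtain ⟨j, hj, rfl⟩ := hsurj i
    exact ⟨j, Finset.mem_filter.mpr ⟨Finset.mem_range.mpr hj,
      (Finset.mem_filter.mp hi).2⟩, rfl⟩


theorem natCast_val_zmod (n : ℕ) (x : ZMod (n+1)) : ((x.val : ℕ) : ZMod (n+1)) = x :=
  ZMod.natCast_rightInverse x


theorem cast_inj_of_lt (n : ℕ) {j k : ℕ} (hj : j < n+1) (hk : k < n+1)
    (h : ((j : ℕ) : ZMod (n+1)) = k) : j = k := by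
  have := ZMod.val_cast_of_lt hj
  have h2 := ZMod.val_cast_of_lt hk
  rw [← this, ← h2, h]


def trAux : Bool → List Bool → ℕ
  | _, [] => 0
  | a, b :: t => (if a = b then 0 else 1) + trAux b t


def last' : Bool → List Bool → Bool
  | a, [] => a
  | _, b :: t => last' b t


theorem trAux_append (a : Bool) (u v : List Bool) :
    trAux a (u ++ v) = trAux a u + trAux (last' a u) v := by
  induction u generalizing a with
  | nil => simp [trAux, last']
  | cons b t ih => simp [trAux, last', ih b, Nat.add_assoc]


def chainP : Bool → List (List Bool) → ℕ
  | _, [] => 0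
  | a, l :: ls => trAux a l + chainP (last' a l) ls


def lastC : Bool → List (List Bool) → Bool
  | a, [] => a
  | a, l :: ls => lastC (last' a l) ls


theorem trAux_flatten (a : Bool) (ls : List (List Bool)) :
    trAux a ls.flatten = chainP a ls := by
  induction ls generalizing a with
  | nil => simp [trAux, chainP]
  | cons l ls ih => simp [chainP, trAux_append, ih]


theorem chainP_append (a : Bool) (ls₁ ls₂ : List (List Bool)) :
    chainP a (ls₁ ++ ls₂) = chainP a ls₁ + chainP (lastC a ls₁) ls₂ := by
  induction ls₁ generalizing a with
  | nil => simp [chainP, lastC]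
  | cons l ls ih => simp [chainP, lastC, ih, Nat.add_assoc]


theorem lastC_append (a : Bool) (ls₁ ls₂ : List (List Bool)) :
    lastC a (ls₁ ++ ls₂) = lastC (lastC a ls₁) ls₂ := by
  induction ls₁ generalizing a with
  | nil => simp [lastC]
  | cons l ls ih => simp [lastC, ih]


theorem listTrans_eq (a : Bool) (t : List Bool) : listTrans (a :: t) = trAux a t := by
  induction t generalizing a with
  | nil => simp [listTrans, trAux]
  | cons b t ih =>
      have := ih b
      simp [listTrans, trAux, List.zip] at this ⊢
      rw [← this]
      by_cases h : a = b <;> simp [h, Nat.add_comm]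


theorem cycTrans_eq (a : Bool) (t : List Bool) :
    cycTrans (a :: t) = trAux a ((a :: t) ++ [a]) := by
  show listTrans ((a :: t) ++ [a]) = _
  rw [List.cons_append, listTrans_eq]
  simp [trAux]


theorem cycTrans_flatten (ls : List (List Bool)) (a : Bool) (t : List Bool)
    (h : ls.flatten = a :: t) :
    cycTrans ls.flatten = chainP a ls + (if lastC a ls = a then 0 else 1) := by
  have h3 : trAux a ((ls ++ [[a]]).flatten) = chainP a ls + (if lastC a ls = a then 0 else 1) := by
    rw [trAux_flatten, chainP_append]
    simp [chainP, trAux, last']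
  rw [h, cycTrans_eq, ← h]
  have h2 : ls.flatten ++ [a] = (ls ++ [[a]]).flatten := by simp
  rw [h2, h3]


def bigC (n : ℕ) (lab : ZMod (n+1) → Finset Bool) (j : ℕ) : ℕ :=
  if lab ((j : ℕ) : ZMod (n+1)) = {true, false} then 1 else 0


def bndC (n : ℕ) (F G : ZMod (n+1) → Bool) (j : ℕ) : ℕ :=
  if (if j = 0 then F ((0:ℕ) : ZMod (n+1)) else G (((j-1 : ℕ)) : ZMod (n+1)))
      = F ((j : ℕ) : ZMod (n+1)) then 0 else 1


theorem arrEval (n : ℕ) (lab : ZMod (n+1) → Finset Bool) (F G : ZMod (n+1) → Bool)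
    (hG : ∀ i, G i = if lab i = {true, false} then !(F i) else F i) :
    cycTrans (arranged n (fun i => if lab i = {true, false} then [F i, G i] else [F i]))
      = (Finset.univ.filter fun i => lab i = {true, false}).card
        + (Finset.univ.filter fun i => G i ≠ F (i+1)).card := by
  set L : ZMod (n+1) → List Bool :=
    fun i => if lab i = {true, false} then [F i, G i] else [F i] with hL
  set gg : ℕ → List Bool := fun j => L ((j : ℕ) : ZMod (n+1)) with hgg
  have hof : arranged n L = ((List.range (n+1)).map gg).flatten := by
    unfold arranged
    rw [List.ofFn_eq_map]
    congr 1
    rw [← List.map_coe_finRange_eq_range, List.map_map]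
    rfl
  have htr : ∀ (c : Bool) (i : ZMod (n+1)), trAux c (L i) =
      ((if c = F i then 0 else 1) + if lab i = {true, false} then 1 else 0) := by
    intro c i
    by_cases hb : lab i = {true, false}
    · have hGi : G i = !(F i) := by rw [hG i, if_pos hb]
      simp [hL, if_pos hb, trAux, hGi]
    · simp [hL, if_neg hb, trAux]
  have hlast : ∀ (c : Bool) (i : ZMod (n+1)), last' c (L i) = G i := by
    intro c i
    by_cases hb : lab i = {true, false}
    · simp [hL, if_pos hb, last']
    · simp [hL, if_neg hb, last', hG i]
  have chainEval : ∀ k : ℕ,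
      chainP (F ((0:ℕ) : ZMod (n+1))) ((List.range k).map gg)
        = (∑ j ∈ Finset.range k, bigC n lab j) + ∑ j ∈ Finset.range k, bndC n F G j ∧
      lastC (F ((0:ℕ) : ZMod (n+1))) ((List.range k).map gg)
        = (if k = 0 then F ((0:ℕ) : ZMod (n+1)) else G (((k-1 : ℕ)) : ZMod (n+1))) := by
    intro k
    induction k with
    | zero => simp [chainP, lastC]
    | succ k ih =>
        rw [List.range_succ, List.map_append, chainP_append, lastC_append,
          Finset.sum_range_succ, Finset.sum_range_succ, ih.1, ih.2]
        constructor
        · have h1 : chainP (if k = 0 then F ((0:ℕ) : ZMod (n+1))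
              else G (((k-1 : ℕ)) : ZMod (n+1))) (List.map gg [k])
              = bigC n lab k + bndC n F G k := by
            simp only [List.map_cons, List.map_nil, chainP, hgg]
            rw [htr]
            simp only [bigC, bndC]
            omega
          rw [h1]
          omega
        · simp only [List.map_cons, List.map_nil, lastC, hgg]
          rw [hlast]
          simp [lastC]
  obtain ⟨t, ht⟩ : ∃ t, ((List.range (n+1)).map gg).flatten
      = F ((0:ℕ) : ZMod (n+1)) :: t := by
    rw [List.range_succ_eq_map, List.map_cons, List.flatten_cons]
    by_cases hb : lab ((0:ℕ) : ZMod (n+1)) = {true, false}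
    · exact ⟨[G ((0:ℕ) : ZMod (n+1))] ++ _, by simp only [hgg, hL, if_pos hb]; rfl⟩
    · exact ⟨_, by simp only [hgg, hL, if_neg hb]; rfl⟩
  have hcyc := cycTrans_flatten ((List.range (n+1)).map gg) _ t ht
  rw [hof, hcyc, (chainEval (n+1)).1, (chainEval (n+1)).2]
  -- big part
  have hbig : (∑ j ∈ Finset.range (n+1), bigC n lab j)
      = (Finset.univ.filter fun i => lab i = {true, false}).card := by
    rw [← card_filter_comp n (fun i => lab i = {true, false}) (fun j => ((j:ℕ) : ZMod (n+1)))
      (fun j hj k hk he => cast_inj_of_lt n hj hk he)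
      (fun i => ⟨i.val, ZMod.val_lt i, natCast_val_zmod n i⟩)]
    rw [Finset.card_filter]
    exact Finset.sum_congr rfl (fun j _ => rfl)
  -- boundary part
  have hwrap : ((n:ℕ) : ZMod (n+1)) + 1 = (((0:ℕ)) : ZMod (n+1)) := by
    have h0 : (((n+1 : ℕ)) : ZMod (n+1)) = 0 := ZMod.natCast_self (n+1)
    push_cast at h0 ⊢
    linear_combination h0
  have hbnd : (∑ j ∈ Finset.range (n+1), bndC n F G j)
        + (if (if n+1 = 0 then F ((0:ℕ) : ZMod (n+1)) else G (((n+1-1 : ℕ)) : ZMod (n+1)))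
            = F ((0:ℕ) : ZMod (n+1)) then 0 else 1)
      = (Finset.univ.filter fun i => G i ≠ F (i+1)).card := by
    have hstep : (∑ j ∈ Finset.range (n+1), bndC n F G j)
        = ∑ j ∈ Finset.range n, (if G ((j:ℕ) : ZMod (n+1)) = F (((j:ℕ) : ZMod (n+1)) + 1) then 0 else 1) := by
      rw [Finset.sum_range_succ']
      have h0 : bndC n F G 0 = 0 := by simp [bndC]
      rw [h0, add_zero]
      apply Finset.sum_congr rfl
      intro j _
      unfold bndC
      have e1 : (((j+1 : ℕ)) : ZMod (n+1)) = ((j:ℕ) : ZMod (n+1)) + 1 := by push_cast; ring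
      simp only [Nat.succ_ne_zero, if_false, Nat.add_sub_cancel, e1]
    have hwrapterm : (if (if n+1 = 0 then F ((0:ℕ) : ZMod (n+1)) else G (((n+1-1 : ℕ)) : ZMod (n+1)))
            = F ((0:ℕ) : ZMod (n+1)) then 0 else 1)
        = (if G ((n:ℕ) : ZMod (n+1)) = F (((n:ℕ) : ZMod (n+1)) + 1) then 0 else 1) := by
      rw [hwrap]
      simp
    rw [hstep, hwrapterm, ← Finset.sum_range_succ
      (fun j => if G ((j:ℕ) : ZMod (n+1)) = F (((j:ℕ) : ZMod (n+1)) + 1) then 0 else 1) n]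
    rw [← card_filter_comp n (fun i => G i ≠ F (i+1)) (fun j => ((j:ℕ) : ZMod (n+1)))
      (fun j hj k hk he => cast_inj_of_lt n hj hk he)
      (fun i => ⟨i.val, ZMod.val_lt i, natCast_val_zmod n i⟩)]
    rw [Finset.card_filter]
    apply Finset.sum_congr rfl
    intro j _
    by_cases hp : G ((j:ℕ) : ZMod (n+1)) = F (((j:ℕ) : ZMod (n+1)) + 1) <;> simp [hp]
  omega


theorem extract (w : ℕ → Bool) (r : ℕ) : ∀ (p L : ℕ), p ≤ L →
    r ≤ ((Finset.Ico p L).filter fun j => w j ≠ w (j+1)).card →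
    ∃ a : ℕ → ℕ, a 0 = p ∧ (∀ k < r, a k < a (k+1)) ∧ (∀ k ≤ r, a k ≤ L) ∧
      (∀ k ≤ r, w (a k) = (if k % 2 = 0 then w p else ¬ w p)) := by
  induction r with
  | zero =>
      intro p L hpL _
      exact ⟨fun _ => p, rfl, by omega, by intro k hk; interval_cases k; exact hpL,
        by intro k hk; interval_cases k; simp⟩
  | succ r ih =>
      intro p L hpL hcard
      set S := (Finset.Ico p L).filter fun j => w j ≠ w (j+1) with hS
      have hne : S.Nonempty := Finset.card_pos.mp (by omega)
      set j0 := S.min' hne with hj0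
      have hj0mem : j0 ∈ S := S.min'_mem hne
      have hj0min : ∀ j ∈ S, j0 ≤ j := fun j hj => S.min'_le j hj
      have hj0Ico : j0 ∈ Finset.Ico p L := (Finset.mem_filter.mp hj0mem).1
      have hj0tr : w j0 ≠ w (j0+1) := (Finset.mem_filter.mp hj0mem).2
      have hpj0 : p ≤ j0 := (Finset.mem_Ico.mp hj0Ico).1
      have hj0L : j0 < L := (Finset.mem_Ico.mp hj0Ico).2
      -- w is constant on [p, j0]
      have hconst : ∀ q, p ≤ q → q ≤ j0 → w q = w p := by
        intro q
        induction q with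
        | zero =>
            intro hq1 _
            obtain rfl : p = 0 := by omega
            rfl
        | succ q ihq =>
            intro hq1 hq2
            rcases Nat.lt_or_ge p (q+1) with hlt | hge
            · have hq : p ≤ q := by omega
              have hwq : w q = w p := ihq hq (by omega)
              by_contra hne'
              have hqS : q ∈ S := by
                refine Finset.mem_filter.mpr ⟨Finset.mem_Ico.mpr ⟨hq, by omega⟩, ?_⟩
                intro heq
                exact hne' (by rw [← heq]; exact hwq)
              exact absurd (hj0min q hqS) (by omega)
            · have hpq : p = q + 1 := by omega
              rw [hpq]
      have hwj0 : w j0 = w p := hconst j0 hpj0 le_rfl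
      -- count in the tail
      have hsplit : r ≤ ((Finset.Ico (j0+1) L).filter fun j => w j ≠ w (j+1)).card := by
        have hunion : Finset.Ico p L = Finset.Ico p (j0+1) ∪ Finset.Ico (j0+1) L :=
          (Finset.Ico_union_Ico_eq_Ico (by omega) (by omega)).symm
        have h1 : ((Finset.Ico p (j0+1)).filter fun j => w j ≠ w (j+1)).card ≤ 1 := by
          refine Finset.card_le_one.mpr ?_
          intro a ha b hb
          have ha' := Finset.mem_filter.mp ha
          have hb' := Finset.mem_filter.mp hb
          have haS : a ∈ S := Finset.mem_filter.mpr
            ⟨Finset.mem_Ico.mpr ⟨(Finset.mem_Ico.mp ha'.1).1, by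
              have := (Finset.mem_Ico.mp ha'.1).2; omega⟩, ha'.2⟩
          have hbS : b ∈ S := Finset.mem_filter.mpr
            ⟨Finset.mem_Ico.mpr ⟨(Finset.mem_Ico.mp hb'.1).1, by
              have := (Finset.mem_Ico.mp hb'.1).2; omega⟩, hb'.2⟩
          have := hj0min a haS
          have := hj0min b hbS
          have := (Finset.mem_Ico.mp ha'.1).2
          have := (Finset.mem_Ico.mp hb'.1).2
          omega
        have hle := Finset.card_union_le
          ((Finset.Ico p (j0+1)).filter fun j => w j ≠ w (j+1))
          ((Finset.Ico (j0+1) L).filter fun j => w j ≠ w (j+1))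
        rw [← Finset.filter_union, ← hunion, ← hS] at hle
        omega
      obtain ⟨a', ha0, hmono, hbd, hval⟩ := ih (j0+1) L (by omega) hsplit
      have hwp' : w (j0+1) = ! w p := by
        rw [← hwj0]; revert hj0tr; cases w j0 <;> cases w (j0+1) <;> simp
      refine ⟨fun k => if k = 0 then p else a' (k-1), rfl, ?_, ?_, ?_⟩
      · intro k hk
        rcases Nat.eq_zero_or_pos k with rfl | hkpos
        · simpa [ha0] using Nat.lt_succ_of_le hpj0
        · have h1 : k - 1 < r := by omega
          have := hmono (k-1) h1
          simp only [if_neg (by omega : ¬ k = 0), if_neg (by omega : ¬ k + 1 = 0)]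
          have : a' (k-1) < a' (k-1+1) := this
          have hkk : k + 1 - 1 = k - 1 + 1 := by omega
          rw [hkk]; exact this
      · intro k hk
        rcases Nat.eq_zero_or_pos k with rfl | hkpos
        · simpa using hpL
        · simp only [if_neg (by omega : ¬ k = 0)]
          exact hbd (k-1) (by omega)
      · intro k hk
        rcases Nat.eq_zero_or_pos k with rfl | hkpos
        · simp
        · simp only [if_neg (by omega : ¬ k = 0)]
          have := hval (k-1) (by omega)
          rw [this, hwp']
          rcases Nat.mod_two_eq_zero_or_one k with hpar | hpar
          · have : (k-1) % 2 = 1 := by omega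
            simp [this, hpar]
          · have : (k-1) % 2 = 0 := by omega
            simp [this, hpar]


theorem lemA_core (n : ℕ) (lab : ZMod (n + 1) → Finset Bool) (w : ℕ → Bool)
    (s : ZMod (n+1)) (ε : Bool)
    (hw : ∀ j, w j ∈ lab (s + (if ε then ((j : ℕ) : ZMod (n + 1))
      else -((j : ℕ) : ZMod (n + 1)))))
    (hw0 : w 0 = true) (hwN : w (n+1) = w 0)
    (hcard : 5 ≤ ((Finset.range (n+1)).filter fun j => w j ≠ w (j+1)).card) :
    HasXYXYXY n lab := by
  have hsplit : Finset.filter (fun j => w j ≠ w (j+1)) (Finset.range (n+1)) =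
      if w n ≠ w (n+1) then insert n (Finset.filter (fun j => w j ≠ w (j+1)) (Finset.range n))
      else Finset.filter (fun j => w j ≠ w (j+1)) (Finset.range n) := by
    rw [Finset.range_add_one, Finset.filter_insert]
  have hrIco : Finset.range n = Finset.Ico 0 n := by rw [Finset.range_eq_Ico]
  -- produce b : ℕ → ℕ with the needed properties
  obtain ⟨b, hadj, hb5, hbv⟩ :
      ∃ b : ℕ → ℕ, (∀ k < 5, b k < b (k+1)) ∧ b 5 ≤ n ∧
        (∀ k ≤ 5, w (b k) = (if k % 2 = 0 then true else false)) := by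
    by_cases hn : w n = true
    · have hnot : ¬ (w n ≠ w (n+1)) := by rw [hwN, hw0, hn]; simp
      rw [hsplit, if_neg hnot, hrIco] at hcard
      obtain ⟨a, ha0, hmono, hbd, hval⟩ := extract w 5 0 n (Nat.zero_le n) hcard
      refine ⟨a, hmono, hbd 5 le_rfl, ?_⟩
      intro k hk
      rw [hval k hk, hw0]
      by_cases hkp : k % 2 = 0 <;> simp [hkp]
    · have hnef : w n = false := by simpa using hn
      have hyes : w n ≠ w (n+1) := by rw [hwN, hw0, hnef]; simp
      rw [hsplit, if_pos hyes, hrIco] at hcard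
      have hcard4 : 4 ≤ ((Finset.Ico 0 n).filter fun j => w j ≠ w (j+1)).card := by
        have := Finset.card_insert_le n ((Finset.Ico 0 n).filter fun j => w j ≠ w (j+1))
        omega
      obtain ⟨a, ha0, hmono, hbd, hval⟩ := extract w 4 0 n (Nat.zero_le n) hcard4
      have hval' : ∀ k ≤ 4, w (a k) = (if k % 2 = 0 then true else false) := by
        intro k hk
        rw [hval k hk, hw0]
        by_cases hkp : k % 2 = 0 <;> simp [hkp]
      have ha4n : a 4 < n := by
        have h1 : a 4 ≤ n := hbd 4 le_rfl
        have h2 : w (a 4) = true := by simpa using hval' 4 le_rfl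
        rcases Nat.lt_of_le_of_ne h1 (fun he => by rw [he, hnef] at h2; simp at h2) with h
        exact h
      refine ⟨fun k => if k = 5 then n else a k, ?_, by simp, ?_⟩
      · intro k hk
        show (if k = 5 then n else a k) < (if k + 1 = 5 then n else a (k+1))
        rcases Nat.lt_or_ge k 4 with h4 | h4
        · rw [if_neg (by omega : ¬ k = 5), if_neg (by omega : ¬ k + 1 = 5)]
          exact hmono k (by omega)
        · have hk4 : k = 4 := by omega
          subst hk4
          rw [if_neg (by omega : ¬ (4:ℕ) = 5), if_pos rfl]
          exact ha4n
      · intro k hk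
        show w (if k = 5 then n else a k) = _
        rcases Nat.lt_or_ge k 5 with h5 | h5
        · rw [if_neg (by omega : ¬ k = 5)]
          exact hval' k (by omega)
        · have hk5 : k = 5 := by omega
          subst hk5
          simp [hnef]
  refine ⟨s, fun k => b k.val, ε, ?_, hb5, ?_⟩
  · rw [Fin.strictMono_iff_lt_succ]
    intro i
    have : (i.castSucc : Fin 6).val = i.val := rfl
    have h2 : (i.succ : Fin 6).val = i.val + 1 := rfl
    simp only [this, h2]
    exact hadj i.val (by omega)
  · intro k
    have hv := hbv k.val (by omega)
    have : (decide (k.val % 2 = 0)) = w (b k.val) := by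
      rw [hv]
      by_cases hkp : k.val % 2 = 0 <;> simp [hkp]
    rw [this]
    exact hw (b k.val)


theorem lemA (n : ℕ) (lab : ZMod (n + 1) → Finset Bool) (σ : ZMod (n+1) → Bool)
    (hσ : ∀ i, σ i ∈ lab i)
    (hT : 5 ≤ (Finset.univ.filter fun i : ZMod (n+1) => σ i ≠ σ (i+1)).card) :
    HasXYXYXY n lab := by
  have hne : (Finset.univ.filter fun i : ZMod (n+1) => σ i ≠ σ (i+1)).Nonempty :=
    Finset.card_pos.mp (by omega)
  obtain ⟨i0, hi0⟩ := hne
  have htr : σ i0 ≠ σ (i0 + 1) := (Finset.mem_filter.mp hi0).2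
  cases h0 : σ i0 with
  | true =>
      refine lemA_core n lab (fun j => σ (i0 + (j : ℕ))) i0 true ?_ ?_ ?_ ?_
      · intro j; simpa using hσ (i0 + (j:ℕ))
      · simpa using h0
      · simp [ZMod.natCast_self]
      · have hinj : ∀ j < n+1, ∀ k < n+1, (fun j : ℕ => i0 + (j:ℕ)) j = (fun j : ℕ => i0 + (j:ℕ)) k → j = k := by
          intro j hj k hk he
          exact cast_inj_of_lt n hj hk (by linear_combination he)
        have hsurj : ∀ i, ∃ j < n+1, (fun j : ℕ => i0 + (j:ℕ)) j = i := by
          intro i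
          refine ⟨(i - i0).val, ZMod.val_lt _, ?_⟩
          show i0 + (((i - i0).val : ℕ) : ZMod (n+1)) = i
          rw [natCast_val_zmod]
          ring
        have hcc := card_filter_comp n (fun i => σ i ≠ σ (i+1)) (fun j : ℕ => i0 + (j:ℕ)) hinj hsurj
        show 5 ≤ (Finset.filter (fun j : ℕ => σ (i0 + (j:ℕ)) ≠ σ (i0 + ((j+1:ℕ) : ZMod (n+1))))
          (Finset.range (n+1))).card
        have heq : Finset.filter (fun j : ℕ => σ (i0 + (j:ℕ)) ≠ σ (i0 + ((j+1:ℕ) : ZMod (n+1))))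
            (Finset.range (n+1)) =
            Finset.filter (fun j : ℕ => σ (i0 + (j:ℕ)) ≠ σ ((i0 + (j:ℕ)) + 1)) (Finset.range (n+1)) := by
          apply Finset.filter_congr
          intro j _
          have e3 : i0 + ((j+1:ℕ) : ZMod (n+1)) = (i0 + (j:ℕ)) + 1 := by push_cast; ring
          rw [e3]
        rw [heq, hcc]
        exact hT
  | false =>
      have h1 : σ (i0 + 1) = true := by
        cases h' : σ (i0+1)
        · rw [h0, h'] at htr; simp at htr
        · rfl
      refine lemA_core n lab (fun j => σ ((i0 + 1) - (j : ℕ))) (i0 + 1) false ?_ ?_ ?_ ?_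
      · intro j
        have := hσ ((i0 + 1) - (j:ℕ))
        simpa [sub_eq_add_neg] using this
      · simpa using h1
      · simp [ZMod.natCast_self]
      · have hinj : ∀ j < n+1, ∀ k < n+1, (fun j : ℕ => (i0+1) - (j:ℕ) - 1) j = (fun j : ℕ => (i0+1) - (j:ℕ) - 1) k → j = k := by
          intro j hj k hk he
          exact cast_inj_of_lt n hj hk (by linear_combination -he)
        have hsurj : ∀ i, ∃ j < n+1, (fun j : ℕ => (i0+1) - (j:ℕ) - 1) j = i := by
          intro i
          refine ⟨((i0 + 1) - 1 - i).val, ZMod.val_lt _, ?_⟩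
          show (i0+1) - ((((i0+1) - 1 - i).val : ℕ) : ZMod (n+1)) - 1 = i
          rw [natCast_val_zmod]
          ring
        have hcc := card_filter_comp n (fun i => σ i ≠ σ (i+1)) (fun j : ℕ => (i0+1) - (j:ℕ) - 1) hinj hsurj
        show 5 ≤ (Finset.filter (fun j : ℕ => σ ((i0+1) - (j:ℕ)) ≠ σ ((i0+1) - ((j+1:ℕ) : ZMod (n+1))))
          (Finset.range (n+1))).card
        have heq : Finset.filter (fun j : ℕ => σ ((i0+1) - (j:ℕ)) ≠ σ ((i0+1) - ((j+1:ℕ) : ZMod (n+1))))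
            (Finset.range (n+1)) =
            Finset.filter (fun j : ℕ => σ ((i0+1) - (j:ℕ) - 1) ≠ σ (((i0+1) - (j:ℕ) - 1) + 1))
            (Finset.range (n+1)) := by
          apply Finset.filter_congr
          intro j _
          have e1 : (i0+1) - ((j+1:ℕ) : ZMod (n+1)) = (i0+1) - (j:ℕ) - 1 := by push_cast; ring
          have e2 : ((i0+1) - (j:ℕ) - 1) + 1 = (i0+1) - (j:ℕ) := by ring
          rw [e1, e2]
          exact ne_comm
        rw [heq, hcc]
        exact hT


theorem finsetBool_single : ∀ s : Finset Bool, s ≠ ∅ → s ≠ {true, false} →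
    s = {decide (true ∈ s)} := by decide


theorem finsetBool_mem : ∀ s : Finset Bool, s ≠ ∅ → decide (true ∈ s) ∈ s := by decide


theorem memBoth : ∀ b : Bool, b ∈ ({true, false} : Finset Bool) := by decide


theorem xor_decide_if (b : Bool) (p : Prop) [Decidable p] :
    xor b (decide p) = if p then !b else b := by
  by_cases h : p <;> simp [h]


def FnAux (n : ℕ) (lab : ZMod (n+1) → Finset Bool) (s0 : ZMod (n+1)) : ℕ → Bool
  | 0 => decide (true ∈ lab s0)
  | j+1 => if lab (s0 + ((j+1 : ℕ) : ZMod (n+1))) = {true, false}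
      then xor (FnAux n lab s0 j) (decide (lab (s0 + ((j : ℕ) : ZMod (n+1))) = {true, false}))
      else decide (true ∈ lab (s0 + ((j+1 : ℕ) : ZMod (n+1))))


def SnAux (n : ℕ) (lab : ZMod (n+1) → Finset Bool) (s0 : ZMod (n+1)) : ℕ → Bool
  | 0 => decide (true ∈ lab s0)
  | j+1 => if lab (s0 + ((j+1 : ℕ) : ZMod (n+1))) = {true, false}
      then !(SnAux n lab s0 j)
      else decide (true ∈ lab (s0 + ((j+1 : ℕ) : ZMod (n+1))))


theorem SnAux_eq (n : ℕ) (lab : ZMod (n+1) → Finset Bool) (s0 : ZMod (n+1))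
    (hs0 : lab s0 ≠ {true, false}) : ∀ j, SnAux n lab s0 j
      = xor (FnAux n lab s0 j) (decide (lab (s0 + ((j : ℕ) : ZMod (n+1))) = {true, false})) := by
  intro j
  induction j with
  | zero =>
      have e : s0 + ((0:ℕ) : ZMod (n+1)) = s0 := by push_cast; ring
      rw [e]
      simp [SnAux, FnAux, hs0]
  | succ j ih =>
      by_cases hb : lab (s0 + ((j+1 : ℕ) : ZMod (n+1))) = {true, false}
      · simp only [SnAux, FnAux, if_pos hb, ih]
        rw [decide_eq_true hb, Bool.xor_true]
      · simp only [SnAux, FnAux, if_neg hb, ih]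
        rw [decide_eq_false hb, Bool.xor_false]


theorem constructFG (n : ℕ) (lab : ZMod (n+1) → Finset Bool) (hlab : ∀ i, lab i ≠ ∅)
    (s0 : ZMod (n+1)) (hs0 : lab s0 ≠ {true, false})
    (hT : ∀ σ : ZMod (n+1) → Bool, (∀ i, σ i ∈ lab i) →
      (Finset.univ.filter fun i => σ i ≠ σ (i+1)).card ≤ 4) :
    ∃ F : ZMod (n+1) → Bool,
      (∀ i, lab i ≠ {true, false} → lab i = {F i}) ∧
      (Finset.univ.filter fun i : ZMod (n+1) => lab i = {true, false}).card
        + (Finset.univ.filter fun i =>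
            (if lab i = {true, false} then !(F i) else F i) ≠ F (i+1)).card ≤ 4 := by
  set F : ZMod (n+1) → Bool := fun i => FnAux n lab s0 ((i - s0).val) with hF
  set σ : ZMod (n+1) → Bool := fun i => SnAux n lab s0 ((i - s0).val) with hσ
  -- compatibility
  have ecast : ∀ j, j < n+1 → ((s0 + ((j : ℕ) : ZMod (n+1))) - s0).val = j := by
    intro j hj
    have e : s0 + ((j:ℕ) : ZMod (n+1)) - s0 = ((j:ℕ) : ZMod (n+1)) := by ring
    rw [e, ZMod.val_cast_of_lt hj]
  have ewrap : s0 + (((n+1 : ℕ)) : ZMod (n+1)) = s0 := by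
    rw [ZMod.natCast_self]; ring
  have compatF : ∀ j ≤ n+1, F (s0 + ((j : ℕ) : ZMod (n+1))) = FnAux n lab s0 j := by
    intro j hj
    rcases Nat.lt_or_ge j (n+1) with hlt | hge
    · show FnAux n lab s0 _ = _
      rw [ecast j hlt]
    · have hj1 : j = n+1 := by omega
      subst hj1
      show FnAux n lab s0 ((s0 + (((n+1 : ℕ)) : ZMod (n+1)) - s0).val) = FnAux n lab s0 (n+1)
      rw [ewrap]
      have h1 : (s0 - s0).val = 0 := by rw [sub_self, ZMod.val_zero]
      rw [h1]
      show FnAux n lab s0 0 = FnAux n lab s0 (n+1)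
      simp only [FnAux]
      rw [if_neg (by rw [ewrap]; exact hs0), ewrap]
  have compatS : ∀ j ≤ n+1, σ (s0 + ((j : ℕ) : ZMod (n+1))) = SnAux n lab s0 j := by
    intro j hj
    rcases Nat.lt_or_ge j (n+1) with hlt | hge
    · show SnAux n lab s0 _ = _
      rw [ecast j hlt]
    · have hj1 : j = n+1 := by omega
      subst hj1
      show SnAux n lab s0 ((s0 + (((n+1 : ℕ)) : ZMod (n+1)) - s0).val) = SnAux n lab s0 (n+1)
      rw [ewrap]
      have h1 : (s0 - s0).val = 0 := by rw [sub_self, ZMod.val_zero]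
      rw [h1]
      show SnAux n lab s0 0 = SnAux n lab s0 (n+1)
      simp only [SnAux]
      rw [if_neg (by rw [ewrap]; exact hs0), ewrap]
  -- single vertices are forced
  have singleF : ∀ j, lab (s0 + ((j : ℕ) : ZMod (n+1))) ≠ {true, false} →
      FnAux n lab s0 j = decide (true ∈ lab (s0 + ((j : ℕ) : ZMod (n+1)))) := by
    intro j hj
    cases j with
    | zero =>
        have e : s0 + ((0:ℕ) : ZMod (n+1)) = s0 := by push_cast; ring
        rw [e]; rfl
    | succ j => simp only [FnAux]; rw [if_neg hj]
  have singleS : ∀ j, lab (s0 + ((j : ℕ) : ZMod (n+1))) ≠ {true, false} →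
      SnAux n lab s0 j = decide (true ∈ lab (s0 + ((j : ℕ) : ZMod (n+1)))) := by
    intro j hj
    cases j with
    | zero =>
        have e : s0 + ((0:ℕ) : ZMod (n+1)) = s0 := by push_cast; ring
        rw [e]; rfl
    | succ j => simp only [SnAux]; rw [if_neg hj]
  have hrepr : ∀ i : ZMod (n+1), i = s0 + (((i - s0).val : ℕ) : ZMod (n+1)) := by
    intro i
    rw [natCast_val_zmod]
    ring
  have hvlt : ∀ i : ZMod (n+1), (i - s0).val < n+1 := fun i => ZMod.val_lt _
  -- selections
  have hFsel : ∀ i, lab i ≠ {true, false} → lab i = {F i} := by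
    intro i hb
    have hji : F i = decide (true ∈ lab i) := by
      show FnAux n lab s0 ((i - s0).val) = _
      rw [singleF ((i - s0).val) (by rw [← hrepr i]; exact hb), ← hrepr i]
    rw [hji]
    exact finsetBool_single _ (hlab i) hb
  have hσsel : ∀ i, σ i ∈ lab i := by
    intro i
    by_cases hb : lab i = {true, false}
    · rw [hb]; exact memBoth _
    · have hji : σ i = decide (true ∈ lab i) := by
        show SnAux n lab s0 ((i - s0).val) = _
        rw [singleS ((i - s0).val) (by rw [← hrepr i]; exact hb), ← hrepr i]
      rw [hji]
      exact finsetBool_mem _ (hlab i)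
  refine ⟨F, hFsel, ?_⟩
  -- counting sets
  set TB := (Finset.range (n+1)).filter
    (fun j => lab (s0 + ((j+1 : ℕ) : ZMod (n+1))) = {true, false}) with hTB
  set Tsig := (Finset.range (n+1)).filter
    (fun j => SnAux n lab s0 j ≠ SnAux n lab s0 (j+1)) with hTsig
  set Tbad := (Finset.range (n+1)).filter
    (fun j => xor (FnAux n lab s0 j) (decide (lab (s0 + ((j : ℕ) : ZMod (n+1))) = {true, false}))
      ≠ FnAux n lab s0 (j+1)) with hTbad
  have hTBsub : TB ⊆ Tsig := by
    intro j hj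
    have hb := (Finset.mem_filter.mp hj).2
    refine Finset.mem_filter.mpr ⟨(Finset.mem_filter.mp hj).1, ?_⟩
    show SnAux n lab s0 j ≠ SnAux n lab s0 (j+1)
    simp only [SnAux]
    rw [if_pos hb]
    cases SnAux n lab s0 j <;> simp
  have hdisj : Disjoint TB Tbad := by
    rw [Finset.disjoint_left]
    intro j hj hbad
    have hb := (Finset.mem_filter.mp hj).2
    have hbad2 := (Finset.mem_filter.mp hbad).2
    apply hbad2
    show xor (FnAux n lab s0 j) _ = FnAux n lab s0 (j+1)
    simp only [FnAux]
    rw [if_pos hb]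
  have hTbadsub : Tbad ⊆ Tsig := by
    intro j hj
    have hbad := (Finset.mem_filter.mp hj).2
    have hnb : lab (s0 + ((j+1 : ℕ) : ZMod (n+1))) ≠ {true, false} := by
      intro hb
      apply hbad
      show xor (FnAux n lab s0 j) _ = FnAux n lab s0 (j+1)
      simp only [FnAux]
      rw [if_pos hb]
    refine Finset.mem_filter.mpr ⟨(Finset.mem_filter.mp hj).1, ?_⟩
    show SnAux n lab s0 j ≠ SnAux n lab s0 (j+1)
    rw [SnAux_eq n lab s0 hs0 j, singleS (j+1) hnb, ← singleF (j+1) hnb]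
    exact hbad
  -- transfer cards
  have hTsigcard : Tsig.card ≤ 4 := by
    have hcc := card_filter_comp n (fun i => σ i ≠ σ (i+1))
      (fun j => s0 + ((j : ℕ) : ZMod (n+1)))
      (fun j hj k hk he => cast_inj_of_lt n hj hk (by linear_combination he))
      (fun i => ⟨(i - s0).val, hvlt i, (hrepr i).symm⟩)
    have heq : Tsig = (Finset.range (n+1)).filter
        (fun j => σ (s0 + ((j : ℕ) : ZMod (n+1))) ≠ σ ((s0 + ((j : ℕ) : ZMod (n+1))) + 1)) := by
      rw [hTsig]
      apply Finset.filter_congr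
      intro j hj
      have hjn : j < n+1 := Finset.mem_range.mp hj
      have e1 : (s0 + ((j : ℕ) : ZMod (n+1))) + 1 = s0 + ((j+1 : ℕ) : ZMod (n+1)) := by
        push_cast; ring
      rw [e1, compatS j (by omega), compatS (j+1) (by omega)]
    rw [heq, hcc]
    exact hT σ hσsel
  have hTBcard : TB.card = (Finset.univ.filter
      fun i : ZMod (n+1) => lab i = {true, false}).card := by
    have hcc := card_filter_comp n (fun i => lab i = {true, false})
      (fun j => s0 + ((j+1 : ℕ) : ZMod (n+1)))
      (fun j hj k hk he => by
        have : ((j:ℕ) : ZMod (n+1)) = ((k:ℕ) : ZMod (n+1)) := by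
          push_cast at he ⊢; linear_combination he
        exact cast_inj_of_lt n hj hk this)
      (fun i => ⟨(i - s0 - 1).val, ZMod.val_lt _, by
        have := natCast_val_zmod n (i - s0 - 1)
        push_cast
        rw [this]
        ring⟩)
    rw [← hcc, hTB]
  have hTbadcard : Tbad.card = (Finset.univ.filter fun i =>
      (if lab i = {true, false} then !(F i) else F i) ≠ F (i+1)).card := by
    have hcc := card_filter_comp n
      (fun i => (if lab i = {true, false} then !(F i) else F i) ≠ F (i+1))
      (fun j => s0 + ((j : ℕ) : ZMod (n+1)))
      (fun j hj k hk he => cast_inj_of_lt n hj hk (by linear_combination he))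
      (fun i => ⟨(i - s0).val, hvlt i, (hrepr i).symm⟩)
    have heq : Tbad = (Finset.range (n+1)).filter
        (fun j => (if lab (s0 + ((j : ℕ) : ZMod (n+1))) = {true, false}
            then !(F (s0 + ((j : ℕ) : ZMod (n+1)))) else F (s0 + ((j : ℕ) : ZMod (n+1))))
          ≠ F ((s0 + ((j : ℕ) : ZMod (n+1))) + 1)) := by
      rw [hTbad]
      apply Finset.filter_congr
      intro j hj
      have hjn : j < n+1 := Finset.mem_range.mp hj
      have e1 : (s0 + ((j : ℕ) : ZMod (n+1))) + 1 = s0 + ((j+1 : ℕ) : ZMod (n+1)) := by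
        push_cast; ring
      rw [e1, compatF j (by omega), compatF (j+1) (by omega), xor_decide_if]
    rw [heq, hcc]
  have hcards : TB.card + Tbad.card ≤ Tsig.card := by
    rw [← Finset.card_union_of_disjoint hdisj]
    exact Finset.card_le_card (Finset.union_subset hTBsub hTbadsub)
  rw [← hTBcard, ← hTbadcard]
  omega


theorem allBig (n : ℕ) (lab : ZMod (n+1) → Finset Bool)
    (hall : ∀ i : ZMod (n+1), lab i = {true, false})
    (hboth : (Finset.univ.filter fun i : ZMod (n+1) =>
      lab i = ({true, false} : Finset Bool)).card ≤ 4) :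
    ∃ F : ZMod (n+1) → Bool,
      (∀ i, lab i ≠ {true, false} → lab i = {F i}) ∧
      (Finset.univ.filter fun i : ZMod (n+1) => lab i = {true, false}).card
        + (Finset.univ.filter fun i =>
            (if lab i = {true, false} then !(F i) else F i) ≠ F (i+1)).card ≤ 4 := by
  set F : ZMod (n+1) → Bool := fun i => decide (i.val % 2 = 0) with hF
  have hcard1 : (Finset.univ.filter fun i : ZMod (n+1) =>
      lab i = ({true, false} : Finset Bool)).card = n + 1 := by
    rw [Finset.filter_true_of_mem (fun i _ => hall i), Finset.card_univ, ZMod.card]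
  have hN4 : n + 1 ≤ 4 := by omega
  have hFlip : ∀ i : ZMod (n+1), i.val < n → F (i+1) = !(F i) := by
    intro i hi
    have he1 : i + 1 = ((i.val + 1 : ℕ) : ZMod (n+1)) := by
      push_cast [natCast_val_zmod]; ring
    have hv : (i+1).val = i.val + 1 := by rw [he1, ZMod.val_cast_of_lt (by omega)]
    show decide ((i+1).val % 2 = 0) = !(decide (i.val % 2 = 0))
    rw [hv]
    rcases Nat.mod_two_eq_zero_or_one i.val with h | h
    · have : (i.val + 1) % 2 = 1 := by omega
      simp [h, this]
    · have : (i.val + 1) % 2 = 0 := by omega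
      simp [h, this]
  have hsub : (Finset.univ.filter fun i : ZMod (n+1) =>
      (if lab i = {true, false} then !(F i) else F i) ≠ F (i+1)) ⊆ {((n : ℕ) : ZMod (n+1))} := by
    intro i hi
    have hbad := (Finset.mem_filter.mp hi).2
    rw [if_pos (hall i)] at hbad
    rcases Nat.lt_or_ge i.val n with hlt | hge
    · exact absurd (hFlip i hlt) (fun he => hbad (by rw [he]))
    · have hvn : i.val = n := by have := ZMod.val_lt i; omega
      have : i = ((n : ℕ) : ZMod (n+1)) := by
        apply ZMod.val_injective
        rw [ZMod.val_cast_of_lt (by omega)]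
        exact hvn
      simp [this]
  have hcard2 : (Finset.univ.filter fun i : ZMod (n+1) =>
      (if lab i = {true, false} then !(F i) else F i) ≠ F (i+1)).card ≤ 1 := by
    calc _ ≤ ({((n : ℕ) : ZMod (n+1))} : Finset (ZMod (n+1))).card := Finset.card_le_card hsub
    _ = 1 := Finset.card_singleton _
  refine ⟨F, fun i hi => absurd (hall i) hi, ?_⟩
  rcases Nat.lt_or_ge (n+1) 4 with h3 | h4
  · omega
  · have hn3 : n = 3 := by omega
    subst hn3
    -- show the second filter is empty
    have hempty : (Finset.univ.filter fun i : ZMod 4 =>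
        (if lab i = {true, false} then !(F i) else F i) ≠ F (i+1)) = ∅ := by
      rw [Finset.filter_eq_empty_iff]
      intro i _
      rw [if_pos (hall i)]
      revert i
      rw [hF]
      decide
    rw [hempty]
    simp [hcard1]

theorem key_glue (n : ℕ) (lab : ZMod (n + 1) → Finset Bool)
    (hlab : ∀ i, lab i ≠ ∅)
    (hboth : (Finset.univ.filter fun i : ZMod (n + 1) =>
      lab i = ({true, false} : Finset Bool)).card ≤ 4)
    (h : ¬ ∃ L : ZMod (n + 1) → List Bool,
      IsArrangement n lab L ∧ cycTrans (arranged n L) ≤ 4) :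
    HasXYXYXY n lab := by
  by_contra hnot
  have hT : ∀ σ : ZMod (n+1) → Bool, (∀ i, σ i ∈ lab i) →
      (Finset.univ.filter fun i => σ i ≠ σ (i+1)).card ≤ 4 := by
    intro σ hσ
    by_contra h5
    exact hnot (lemA n lab σ hσ (by omega))
  have hcon : ∃ F : ZMod (n+1) → Bool,
      (∀ i, lab i ≠ {true, false} → lab i = {F i}) ∧
      (Finset.univ.filter fun i : ZMod (n+1) => lab i = {true, false}).card
        + (Finset.univ.filter fun i =>
            (if lab i = {true, false} then !(F i) else F i) ≠ F (i+1)).card ≤ 4 := by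
    by_cases hsing : ∃ s0, lab s0 ≠ {true, false}
    · obtain ⟨s0, hs0⟩ := hsing
      exact constructFG n lab hlab s0 hs0 hT
    · push_neg at hsing
      exact allBig n lab hsing hboth
  obtain ⟨F, hFsel, hbound⟩ := hcon
  set G : ZMod (n+1) → Bool := fun i => if lab i = {true, false} then !(F i) else F i with hG
  apply h
  refine ⟨fun i => if lab i = {true, false} then [F i, G i] else [F i], ?_, ?_⟩
  · intro i
    by_cases hb : lab i = {true, false}
    · have hGi : G i = !(F i) := by rw [hG]; simp only [if_pos hb]
      constructor
      · simp only [if_pos hb, hGi]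
        simp
      · simp only [if_pos hb, hGi, hb]
        cases F i <;> simp [Finset.pair_comm]
    · constructor
      · simp only [if_neg hb]
        simp
      · simp only [if_neg hb]
        rw [List.toFinset_cons, List.toFinset_nil]
        have := hFsel i hb
        simp [this]
  · rw [arrEval n lab F G (fun i => rfl)]
    exact hbound

end AltPaper

open AltPaper in
/-- If at most four vertices of the cyclic sequence carry both labels and the
labels cannot be arranged (in the given cyclic order) into a cyclic sequence with at most 4
transitions, then the sequence contains the pattern `XYXYXY`. -/
theorem statement_2 (n : ℕ) (lab : ZMod (n + 1) → Finset Bool)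
    (hlab : ∀ i, lab i ≠ ∅)
    (hboth : (Finset.univ.filter fun i : ZMod (n + 1) =>
      lab i = ({true, false} : Finset Bool)).card ≤ 4)
    (h : ¬ ∃ L : ZMod (n + 1) → List Bool,
      IsArrangement n lab L ∧ cycTrans (arranged n L) ≤ 4) :
    HasXYXYXY n lab := by
  exact AltPaper.key_glue n lab hlab hboth h
end
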